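/- arXiv:1804.06513 — 4 statements merged into one kernel-verified Lean document; each statement's English description precedes it below -/
import Mathlib

section
/- Let J be a 2-torsion free Jordan ring with nontrivial idempotent e satisfying conditions (i)–(iii), and φ : J → J' a bijective n-multiplicative isomorphism onto a Jordan ring J'. Then φ is additive on J₀: φ(a + b) = φ(a) + φ(b) for all a, b ∈ J₀. -/
/-- Peirce 1-component relative to `e`: elements `x` with `e*x = x`. -/
def peirce1 {J : Type*} [Mul J] (e : J) : Set J := {x | e * x = x}

/-- Peirce 1/2-component relative to `e`: elements `x` with `e*x = (1/2)x`, i.e. `e*x + e*x = x`. -/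
def peirceHalf {J : Type*} [Mul J] [Add J] (e : J) : Set J := {x | e * x + e * x = x}

/-- Peirce 0-component relative to `e`: elements `x` with `e*x = 0`. -/
def peirce0 {J : Type*} [Mul J] [Zero J] (e : J) : Set J := {x | e * x = 0}

/-- The right-normed nonassociative monomial `x₁(x₂(⋯(x_{n-1}x_n)⋯))` on a list of arguments. -/
def rnm {J : Type*} [Mul J] [Zero J] : List J → J
  | [] => 0
  | [x] => x
  | x :: y :: l => x * rnm (y :: l)

/-- `φ` is an `n`-multiplicative map (w.r.t. the right-normed monomial of degree `n`). -/
def IsNMulMap {J J' : Type*} [Mul J] [Zero J] [Mul J'] [Zero J'] (n : ℕ) (φ : J → J') : Prop :=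
  ∀ l : List J, l.length = n → φ (rnm l) = rnm (l.map φ)

namespace NMulAux

variable {R : Type*} [NonUnitalNonAssocCommRing R]

def chainMul (l : List R) (x : R) : R := l.foldr (· * ·) x

@[simp] lemma chainMul_nil (x : R) : chainMul ([] : List R) x = x := rfl
@[simp] lemma chainMul_cons (a : R) (l : List R) (x : R) :
    chainMul (a :: l) x = a * chainMul l x := rfl

lemma chainMul_append (l₁ l₂ : List R) (x : R) :
    chainMul (l₁ ++ l₂) x = chainMul l₁ (chainMul l₂ x) := by
  simp [chainMul, List.foldr_append]

lemma chainMul_add (l : List R) (x y : R) :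
    chainMul l (x + y) = chainMul l x + chainMul l y := by
  induction l with
  | nil => rfl
  | cons a t ih => simp [ih, mul_add]

lemma chainMul_zero (l : List R) : chainMul l (0 : R) = 0 := by
  induction l with
  | nil => rfl
  | cons a t ih => simp [ih]

lemma chainMul_sub (l : List R) (x y : R) :
    chainMul l (x - y) = chainMul l x - chainMul l y := by
  induction l with
  | nil => rfl
  | cons a t ih => simp [ih, mul_sub]

lemma rnm_cons_of_ne_nil (x : R) (l : List R) (h : l ≠ []) :
    rnm (x :: l) = x * rnm l := by
  cases l with
  | nil => exact absurd rfl h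
  | cons y t => rfl

lemma rnm_append (l₁ l₂ : List R) (h : l₂ ≠ []) :
    rnm (l₁ ++ l₂) = chainMul l₁ (rnm l₂) := by
  induction l₁ with
  | nil => rfl
  | cons a t ih =>
      rw [List.cons_append, rnm_cons_of_ne_nil _ _ (by simp [h]), ih, chainMul_cons]

@[simp] lemma rnm_singleton (x : R) : rnm [x] = x := rfl
@[simp] lemma rnm_pair (x y : R) : rnm [x, y] = x * y := rfl

lemma rnm_slot_add (l₁ l₂ : List R) (x y : R) :
    rnm (l₁ ++ (x + y) :: l₂) = rnm (l₁ ++ x :: l₂) + rnm (l₁ ++ y :: l₂) := by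
  have h : ∀ z : R, rnm (l₁ ++ z :: l₂) = chainMul l₁ (rnm (z :: l₂)) := fun z =>
    rnm_append l₁ (z :: l₂) (by simp)
  rw [h, h, h, ← chainMul_add]
  congr 1
  cases l₂ with
  | nil => rfl
  | cons a t =>
      show (x + y) * rnm (a :: t) = x * rnm (a :: t) + y * rnm (a :: t)
      exact add_mul _ _ _

lemma Mzero (h2 : ∀ x : R, x + x = 0 → x = 0)
    (hJ : ∀ x y : R, ((x * x) * y) * x = (x * x) * (y * x)) (x z y : R) :
    ((x * x) * y) * z + ((x * z + z * x) * y) * x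
      = (x * x) * (y * z) + (x * z + z * x) * (y * x) := by
  have e1 : (((x+z)*(x+z))*y)*(x+z) - ((x+z)*(x+z))*(y*(x+z)) = 0 :=
    sub_eq_zero.mpr (hJ (x+z) y)
  have e2 : (((x-z)*(x-z))*y)*(x-z) - ((x-z)*(x-z))*(y*(x-z)) = 0 :=
    sub_eq_zero.mpr (hJ (x-z) y)
  have e3 : ((z*z)*y)*z - (z*z)*(y*z) = 0 := sub_eq_zero.mpr (hJ z y)
  have key :
      ((((x+z)*(x+z))*y)*(x+z) - ((x+z)*(x+z))*(y*(x+z)))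
        - ((((x-z)*(x-z))*y)*(x-z) - ((x-z)*(x-z))*(y*(x-z)))
        - ((((z*z)*y)*z - (z*z)*(y*z)) + (((z*z)*y)*z - (z*z)*(y*z)))
      = (((x*x)*y)*z + ((x*z + z*x)*y)*x - ((x*x)*(y*z) + (x*z + z*x)*(y*x)))
        + (((x*x)*y)*z + ((x*z + z*x)*y)*x - ((x*x)*(y*z) + (x*z + z*x)*(y*x))) := by
    simp only [sub_mul, mul_sub, add_mul, mul_add]
    abel
  rw [e1, e2, e3] at key
  simp only [sub_zero, zero_sub, add_zero, zero_add, sub_self, neg_add_cancel] at key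
  have := h2 _ key.symm
  exact sub_eq_zero.mp this

lemma I2aux (h2 : ∀ x : R, x + x = 0 → x = 0)
    (hJ : ∀ x y : R, ((x * x) * y) * x = (x * x) * (y * x)) (x w u : R) :
    ((x*w + w*x)*u)*u + ((x*u + u*x)*u)*w + ((w*u + u*w)*u)*x
      = (x*w + w*x)*(u*u) + (x*u + u*x)*(u*w) + (w*u + u*w)*(u*x) := by
  have A := Mzero h2 hJ (x+w) u u
  have B := Mzero h2 hJ x u u
  have C := Mzero h2 hJ w u u
  have a0 : (((x+w)*(x+w))*u)*u + (((x+w)*u + u*(x+w))*u)*(x+w)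
      - (((x+w)*(x+w))*(u*u) + ((x+w)*u + u*(x+w))*(u*(x+w))) = 0 := sub_eq_zero.mpr A
  have b0 : ((x*x)*u)*u + ((x*u + u*x)*u)*x - ((x*x)*(u*u) + (x*u + u*x)*(u*x)) = 0 :=
    sub_eq_zero.mpr B
  have c0 : ((w*w)*u)*u + ((w*u + u*w)*u)*w - ((w*w)*(u*u) + (w*u + u*w)*(u*w)) = 0 :=
    sub_eq_zero.mpr C
  have key :
      ((((x+w)*(x+w))*u)*u + (((x+w)*u + u*(x+w))*u)*(x+w)
        - (((x+w)*(x+w))*(u*u) + ((x+w)*u + u*(x+w))*(u*(x+w))))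
      - (((x*x)*u)*u + ((x*u + u*x)*u)*x - ((x*x)*(u*u) + (x*u + u*x)*(u*x)))
      - (((w*w)*u)*u + ((w*u + u*w)*u)*w - ((w*w)*(u*u) + (w*u + u*w)*(u*w)))
      = (((x*w + w*x)*u)*u + ((x*u + u*x)*u)*w + ((w*u + u*w)*u)*x)
        - ((x*w + w*x)*(u*u) + (x*u + u*x)*(u*w) + (w*u + u*w)*(u*x)) := by
    simp only [add_mul, mul_add]
    abel
  rw [a0, b0, c0] at key
  simp only [sub_zero, zero_sub, sub_self, neg_eq_zero] at key
  exact sub_eq_zero.mp key.symm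

end NMulAux
theorem nMulIso_additive_on_zero {J J' : Type*} [NonUnitalNonAssocCommRing J] [NonUnitalNonAssocCommRing J']
    (hJordan : ∀ x y : J, ((x * x) * y) * x = (x * x) * (y * x))
    (hJordan' : ∀ x y : J', ((x * x) * y) * x = (x * x) * (y * x))
    (h2 : ∀ x : J, x + x = 0 → x = 0)
    (e : J) (hid : e * e = e) (hne : e ≠ 0) (hnu : ∃ x : J, e * x ≠ x)
    (hcond1 : ∀ a ∈ peirce1 e, (∀ t ∈ peirceHalf e, t * a = 0) → a = 0)
    (hcond1' : ∀ a ∈ peirce0 e, (∀ t ∈ peirceHalf e, t * a = 0) → a = 0)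
    (hcond2 : ∀ a ∈ peirce0 e, (∀ t ∈ peirce0 e, t * a = 0) → a = 0)
    (hcond3 : ∀ a ∈ peirceHalf e, (∀ t ∈ peirce0 e, t * a = 0) → a = 0)
    (n : ℕ) (hn : 2 ≤ n) (φ : J → J')
    (hbij : Function.Bijective φ) (hmul : IsNMulMap n φ) :
    ∀ a ∈ peirce0 e, ∀ b ∈ peirce0 e,
      φ (a + b) = φ a + φ b := by
  open NMulAux in
  obtain ⟨m, rfl⟩ : ∃ m, n = m + 2 := ⟨n - 2, by omega⟩
  clear hn hne hnu hJordan'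
  obtain ⟨g, hg⟩ : ∃ g : J → J, ∀ x, g x = e * x + e * x :=
    ⟨fun x => e * x + e * x, fun _ => rfl⟩
  have hgadd : ∀ x y : J, g (x + y) = g x + g y := by
    intro x y; simp only [hg, mul_add]; abel
  have hgzero : g (0 : J) = 0 := by simp [hg]
  have hgsub : ∀ x y : J, g (x - y) = g x - g y := by
    intro x y; simp only [hg, mul_sub]; abel
  have hitadd : ∀ (k : ℕ) (x y : J), g^[k] (x + y) = g^[k] x + g^[k] y := by
    intro k; induction k with
    | zero => intro x y; simp
    | succ k ih =>
        intro x y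
        rw [Function.iterate_succ_apply, Function.iterate_succ_apply,
          Function.iterate_succ_apply, hgadd, ih]
  have hitzero : ∀ k : ℕ, g^[k] (0 : J) = 0 := by
    intro k; induction k with
    | zero => simp
    | succ k ih => rw [Function.iterate_succ_apply, hgzero, ih]
  have hitsub : ∀ (k : ℕ) (x y : J), g^[k] (x - y) = g^[k] x - g^[k] y := by
    intro k; induction k with
    | zero => intro x y; simp
    | succ k ih =>
        intro x y
        rw [Function.iterate_succ_apply, Function.iterate_succ_apply,
          Function.iterate_succ_apply, hgsub, ih]
  have hcommit : ∀ (k : ℕ) (x : J), g^[k] (g x) = g (g^[k] x) := by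
    intro k x; rw [← Function.iterate_succ_apply, Function.iterate_succ_apply']
  have chainRep : ∀ (k : ℕ) (x : J), chainMul (List.replicate k (e + e)) x = g^[k] x := by
    intro k; induction k with
    | zero => intro x; simp [chainMul]
    | succ k ih =>
        intro x
        rw [List.replicate_succ, chainMul_cons, ih, Function.iterate_succ_apply']
        rw [hg, add_mul]
  -- Peirce machinery
  have I1 : ∀ z y : J, (e*y)*z + ((e*z + z*e)*y)*e = e*(y*z) + (e*z + z*e)*(y*e) := by
    intro z y
    have h := NMulAux.Mzero h2 hJordan e z y
    rwa [hid] at h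
  have comm1 : ∀ p : J, e*p = p → ∀ y : J, e*(p*y) = p*(e*y) := by
    intro p hp y
    have h := I1 p y
    rw [hp, mul_comm p e, hp] at h
    rw [add_mul, add_mul, add_mul] at h
    rw [mul_comm (e*y) p, mul_comm (p*y) e, mul_comm y p, mul_comm y e] at h
    have key : e*(p*y) - p*(e*y)
        = (p*(e*y) + (e*(p*y) + e*(p*y))) - (e*(p*y) + (p*(e*y) + p*(e*y))) := by abel
    rw [h, sub_self] at key
    exact sub_eq_zero.mp key
  have comm0 : ∀ t : J, e*t = 0 → ∀ y : J, e*(t*y) = t*(e*y) := by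
    intro t ht y
    have h := I1 t y
    rw [ht, mul_comm t e, ht] at h
    simp only [add_zero, zero_mul, mul_zero] at h
    rw [mul_comm (e*y) t, mul_comm y t] at h
    exact h.symm
  have P10 : ∀ p t : J, e*p = p → e*t = 0 → p*t = 0 := by
    intro p t hp ht
    have h1 : e*(p*t) = 0 := by rw [comm1 p hp t, ht, mul_zero]
    have h2' : e*(t*p) = t*p := by rw [comm0 t ht p, hp]
    rw [mul_comm t p] at h2'
    rw [h1] at h2'
    exact h2'.symm
  have P0h : ∀ t w : J, e*t = 0 → (e*w + e*w = w) → e*(t*w) + e*(t*w) = t*w := by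
    intro t w ht hw
    rw [comm0 t ht w, ← mul_add, hw]
  have P1h : ∀ p w : J, e*p = p → (e*w + e*w = w) → e*(p*w) + e*(p*w) = p*w := by
    intro p w hp hw
    rw [comm1 p hp w, ← mul_add, hw]
  have hdouble : ∀ z : J, (z + z) * e = e*z + e*z := by
    intro z; rw [add_mul, mul_comm z e]
  have F3 : ∀ x : J, e*(e*(e*x)) + e*(e*(e*x)) + e*x = e*(e*x) + e*(e*x) + e*(e*x) := by
    intro x
    have h := NMulAux.I2aux h2 hJordan x e e
    rw [hid] at h
    rw [mul_comm x e] at h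
    have c1 : (e*x + e*x)*e = e*(e*x) + e*(e*x) := hdouble (e*x)
    have c2 : ((e*x + e*x)*e)*e = e*(e*(e*x)) + e*(e*(e*x)) := by
      rw [c1]; exact hdouble (e*(e*x))
    have c3 : ((e + e)*e)*x = e*x + e*x := by
      rw [add_mul, hid, add_mul]
    have c5 : (e + e)*(e*x) = e*(e*x) + e*(e*x) := add_mul e e (e*x)
    rw [c2, c3, c1, c5] at h
    have key : (e*(e*(e*x)) + e*(e*(e*x)) + e*x - (e*(e*x) + e*(e*x) + e*(e*x)))
        + (e*(e*(e*x)) + e*(e*(e*x)) + e*x - (e*(e*x) + e*(e*x) + e*(e*x)))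
        = ((e*(e*(e*x)) + e*(e*(e*x))) + (e*(e*(e*x)) + e*(e*(e*x))) + (e*x + e*x))
          - ((e*(e*x) + e*(e*x)) + (e*(e*x) + e*(e*x)) + (e*(e*x) + e*(e*x))) := by abel
    rw [h, sub_self] at key
    exact sub_eq_zero.mp (h2 _ key)
  have Phh : ∀ w w' : J, (e*w + e*w = w) → (e*w' + e*w' = w') → e*(e*(w*w')) = e*(w*w') := by
    intro w w' hw hw'
    have h := NMulAux.I2aux h2 hJordan w w' e
    rw [hid] at h
    rw [mul_comm w e, mul_comm w' e] at h
    rw [hw, hw'] at h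
    rw [mul_comm w e, mul_comm w' e] at h
    rw [mul_comm w' w] at h
    have c1 : (w*w' + w*w')*e = e*(w*w') + e*(w*w') := hdouble (w*w')
    have c2 : ((w*w' + w*w')*e)*e = e*(e*(w*w')) + e*(e*(w*w')) := by
      rw [c1]; exact hdouble (e*(w*w'))
    rw [c2, c1] at h
    rw [mul_comm (e*w) w', mul_comm (e*w') w] at h
    have key : (e*(e*(w*w')) - e*(w*w')) + (e*(e*(w*w')) - e*(w*w'))
        = (e*(e*(w*w')) + e*(e*(w*w')) + w'*(e*w) + w*(e*w'))
          - (e*(w*w') + e*(w*w') + w*(e*w') + w'*(e*w)) := by abel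
    rw [h, sub_self] at key
    exact sub_eq_zero.mp (h2 _ key)
  -- decomposition lemmas
  have Edec1 : ∀ x : J, e * (g (g x) - g x) = g (g x) - g x := by
    intro x
    have hf := F3 x
    have expand : e * (g (g x) - g x) - (g (g x) - g x)
        = ((e*(e*(e*x)) + e*(e*(e*x)) + e*x) - (e*(e*x) + e*(e*x) + e*(e*x)))
          + ((e*(e*(e*x)) + e*(e*(e*x)) + e*x) - (e*(e*x) + e*(e*x) + e*(e*x))) := by
      simp only [hg, mul_add, mul_sub]
      abel
    rw [hf, sub_self, add_zero] at expand
    exact sub_eq_zero.mp expand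
  have Hdech : ∀ x : J,
      e * ((g x + g x + g x + g x) - (g (g x) + g (g x)))
        + e * ((g x + g x + g x + g x) - (g (g x) + g (g x)))
      = (g x + g x + g x + g x) - (g (g x) + g (g x)) := by
    intro x
    have hf := F3 x
    have expand : ((g x + g x + g x + g x) - (g (g x) + g (g x)))
        - (e * ((g x + g x + g x + g x) - (g (g x) + g (g x)))
          + e * ((g x + g x + g x + g x) - (g (g x) + g (g x))))
        = (((e*(e*(e*x)) + e*(e*(e*x)) + e*x) - (e*(e*x) + e*(e*x) + e*(e*x)))
          + ((e*(e*(e*x)) + e*(e*(e*x)) + e*x) - (e*(e*x) + e*(e*x) + e*(e*x))))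
          + (((e*(e*(e*x)) + e*(e*(e*x)) + e*x) - (e*(e*x) + e*(e*x) + e*(e*x)))
          + ((e*(e*(e*x)) + e*(e*(e*x)) + e*x) - (e*(e*x) + e*(e*x) + e*(e*x))))
          + (((e*(e*(e*x)) + e*(e*(e*x)) + e*x) - (e*(e*x) + e*(e*x) + e*(e*x)))
          + ((e*(e*(e*x)) + e*(e*(e*x)) + e*x) - (e*(e*x) + e*(e*x) + e*(e*x))))
          + (((e*(e*(e*x)) + e*(e*(e*x)) + e*x) - (e*(e*x) + e*(e*x) + e*(e*x)))
          + ((e*(e*(e*x)) + e*(e*(e*x)) + e*x) - (e*(e*x) + e*(e*x) + e*(e*x)))) := by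
      simp only [hg, mul_add, mul_sub]
      abel
    rw [hf, sub_self] at expand
    simp only [add_zero] at expand
    exact (sub_eq_zero.mp expand).symm
  have Edec0 : ∀ x : J, e * ((g (g x) + x + x) - (g x + g x + g x)) = 0 := by
    intro x
    have hf := F3 x
    have expand : e * ((g (g x) + x + x) - (g x + g x + g x))
        = ((e*(e*(e*x)) + e*(e*(e*x)) + e*x) - (e*(e*x) + e*(e*x) + e*(e*x)))
          + ((e*(e*(e*x)) + e*(e*(e*x)) + e*x) - (e*(e*x) + e*(e*x) + e*(e*x))) := by
      simp only [hg, mul_add, mul_sub]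
      abel
    rw [hf, sub_self, add_zero] at expand
    exact expand
  have decSum : ∀ x : J,
      (g (g x) - g x) + ((g x + g x + g x + g x) - (g (g x) + g (g x)))
        + ((g (g x) + x + x) - (g x + g x + g x)) = x + x := by
    intro x; abel
  have J1tor : ∀ (k : ℕ) (p : J), e*p = p → g^[k] p = 0 → p = 0 := by
    intro k; induction k with
    | zero => intro p _ h; simpa using h
    | succ k ih =>
        intro p hp h
        rw [Function.iterate_succ_apply] at h
        have hgp : g p = p + p := by rw [hg, hp]
        rw [hgp, hitadd] at h
        exact ih p hp (h2 _ h)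
  have hfix : ∀ x : J, g x = x → ∀ k : ℕ, g^[k] x = x := by
    intro x hx k; induction k with
    | zero => simp
    | succ k ih => rw [Function.iterate_succ_apply, hx, ih]
  have hJhit : ∀ w : J, (e*w + e*w = w) → ∀ k : ℕ, g^[k] w = w := by
    intro w hw
    exact hfix w (by rw [hg]; exact hw)
  have hJ0it : ∀ t : J, e * t = 0 → ∀ k : ℕ, 1 ≤ k → g^[k] t = 0 := by
    intro t ht k hk
    obtain ⟨k', rfl⟩ : ∃ k', k = k' + 1 := ⟨k - 1, by omega⟩
    rw [Function.iterate_succ_apply]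
    have hgt : g t = 0 := by rw [hg, ht, add_zero]
    rw [hgt, hitzero]
  have hJ1it : ∀ p : J, e*p = p → ∀ k : ℕ, e * (g^[k] p) = g^[k] p := by
    intro p hp k; induction k with
    | zero => simpa
    | succ k ih =>
        rw [Function.iterate_succ_apply']
        have hq : g (g^[k] p) = g^[k] p + g^[k] p := by rw [hg, ih]
        rw [hq, mul_add, ih]
  have gkE : ∀ k : ℕ, 1 ≤ k → ∀ u : J, g^[k] u = 0 → e * u = 0 := by
    intro k hk u hu
    have hP : g (g u) - g u = 0 := by
      apply J1tor k _ (Edec1 u)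
      simp only [hitsub, hcommit, hu, hgzero]
      abel
    have hH : (g u + g u + g u + g u) - (g (g u) + g (g u)) = 0 := by
      have hHh := Hdech u
      have hfixH := hJhit _ hHh k
      rw [← hfixH]
      simp only [hitsub, hitadd, hcommit, hu, hgzero]
      abel
    have hZ : u + u = (g (g u) + u + u) - (g u + g u + g u) := by
      have hs := decSum u
      rw [hP, hH] at hs
      rw [← hs]; abel
    have h0 : e * (u + u) = 0 := by rw [hZ]; exact Edec0 u
    rw [mul_add] at h0
    exact h2 _ h0
  -- K2 lemmas
  have K2gJ1 : ∀ v : J, e*(e*v) = e*v → e * (g v) = g v := by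
    intro v hv; rw [hg, mul_add, hv]
  have K2it : ∀ v : J, e*(e*v) = e*v → ∀ k : ℕ, 1 ≤ k → e * (g^[k] v) = g^[k] v := by
    intro v hv k hk
    obtain ⟨k', rfl⟩ : ∃ k', k = k' + 1 := ⟨k - 1, by omega⟩
    rw [Function.iterate_succ_apply]
    exact hJ1it (g v) (K2gJ1 v hv) k'
  have K2K2 : ∀ v : J, e*(e*v) = e*v → ∀ k : ℕ, e*(e*(g^[k] v)) = e*(g^[k] v) := by
    intro v hv k
    cases k with
    | zero => simpa using hv
    | succ k =>
        have h := K2it v hv (k+1) (by omega)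
        rw [h]; exact h
  have K2J0mul : ∀ t v : J, e*t = 0 → e*(e*v) = e*v → e*(t*v) = 0 := by
    intro t v ht hv
    rw [comm0 t ht v, mul_comm t (e*v)]
    exact P10 (e*v) t hv ht
  -- chain preservation
  have chainJh : ∀ s : List J, (∀ y ∈ s, e*y = 0) → ∀ x : J,
      (e*x + e*x = x) → e * chainMul s x + e * chainMul s x = chainMul s x := by
    intro s; induction s with
    | nil => intro _ x hx; simpa using hx
    | cons a t ih =>
        intro hs x hx
        rw [chainMul_cons]
        exact P0h a (chainMul t x) (hs a (by simp)) (ih (fun y hy => hs y (by simp [hy])) x hx)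
  have chainJ0 : ∀ s : List J, (∀ y ∈ s, e*y = 0) → ∀ x : J,
      e*x = 0 → e * chainMul s x = 0 := by
    intro s; induction s with
    | nil => intro _ x hx; simpa using hx
    | cons a t ih =>
        intro hs x hx
        rw [chainMul_cons, comm0 a (hs a (by simp)), ih (fun y hy => hs y (by simp [hy])) x hx,
          mul_zero]
  -- phi machinery
  have hinj := hbij.injective
  have hphi0 : φ 0 = 0 := by
    obtain ⟨x₀, hx₀⟩ := hbij.surjective 0
    have hlen : (List.replicate (m+1) (0:J) ++ [x₀]).length = m + 2 := by simp
    have h := hmul _ hlen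
    have hL : rnm (List.replicate (m+1) (0:J) ++ [x₀]) = 0 := by
      rw [List.replicate_succ, List.cons_append,
        rnm_cons_of_ne_nil _ _ (by simp), zero_mul]
    have hR : rnm ((List.replicate (m+1) (0:J) ++ [x₀]).map φ) = 0 := by
      rw [List.map_append, List.map_replicate]
      simp only [List.map_cons, List.map_nil, hx₀]
      rw [rnm_append _ _ (by simp), rnm_singleton, chainMul_zero]
    rw [hL] at h
    rw [hR] at h
    exact h
  have CL : ∀ C A B : J, φ C = φ A + φ B → ∀ l₁ l₂ : List J,
      l₁.length + l₂.length + 1 = m + 2 →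
      φ (rnm (l₁ ++ C :: l₂)) = φ (rnm (l₁ ++ A :: l₂)) + φ (rnm (l₁ ++ B :: l₂)) := by
    intro C A B hCAB l₁ l₂ hlen
    have len : ∀ X : J, (l₁ ++ X :: l₂).length = m + 2 := by
      intro X; simp only [List.length_append, List.length_cons]; omega
    rw [hmul _ (len C), hmul _ (len A), hmul _ (len B), List.map_append, List.map_cons,
      List.map_append, List.map_cons, List.map_append, List.map_cons, hCAB]
    exact rnm_slot_add _ _ _ _
  have CLg : ∀ C A B : J, φ C = φ A + φ B →
      φ (g^[m+1] C) = φ (g^[m+1] A) + φ (g^[m+1] B) := by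
    intro C A B h
    have key : ∀ X : J, rnm (List.replicate (m+1) (e+e) ++ [X]) = g^[m+1] X := by
      intro X
      rw [rnm_append _ _ (by simp), rnm_singleton, chainRep]
    have h' := CL C A B h (List.replicate (m+1) (e+e)) [] (by simp)
    rw [key, key, key] at h'
    exact h'
  have CLlast : ∀ C A B : J, φ C = φ A + φ B → ∀ (s : List J) (t : J), s.length = m →
      φ (chainMul s (t * C)) = φ (chainMul s (t * A)) + φ (chainMul s (t * B)) := by
    intro C A B h s t hs
    have key : ∀ X : J, rnm ((s ++ [t]) ++ [X]) = chainMul s (t * X) := by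
      intro X
      rw [rnm_append _ _ (by simp), rnm_singleton, chainMul_append]
      rfl
    have h' := CL C A B h (s ++ [t]) [] (by simp [hs])
    rw [key, key, key] at h'
    exact h'
  have CLw : ∀ C A B : J, φ C = φ A + φ B → ∀ w : J,
      φ (g^[m] (C * w)) = φ (g^[m] (A * w)) + φ (g^[m] (B * w)) := by
    intro C A B h w
    have key : ∀ X : J, rnm (List.replicate m (e+e) ++ X :: [w]) = g^[m] (X * w) := by
      intro X
      rw [rnm_append _ _ (by simp), rnm_pair, chainRep]
    have h' := CL C A B h (List.replicate m (e+e)) [w] (by simp)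
    rw [key, key, key] at h'
    exact h'
  have R0 : ∀ (k : ℕ) (x : J), e*x = 0 →
      (∀ s : List J, s.length = k → (∀ y ∈ s, e*y = 0) → ∀ t : J, e*t = 0 →
        chainMul s (t*x) = 0) →
      x = 0 := by
    intro k; induction k with
    | zero =>
        intro x hx hs
        exact hcond2 x hx (fun t ht => hs [] rfl (by simp) t ht)
    | succ k ih =>
        intro x hx hs
        apply hcond2 x hx
        intro t ht
        apply ih (t*x) (by rw [comm0 t ht x, hx, mul_zero])
        intro s hsl hse t' ht'
        have h' := hs (s ++ [t']) (by simp [hsl])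
          (by
            intro y hy
            rcases List.mem_append.mp hy with h1 | h1
            · exact hse y h1
            · simp only [List.mem_singleton] at h1; rw [h1]; exact ht') t ht
        rwa [chainMul_append] at h'
  have LemmaU : ∀ (k : ℕ) (u : J), (∀ s : List J, s.length = k → chainMul s u = 0) → u = 0 := by
    intro k u hu
    cases k with
    | zero => simpa using hu [] rfl
    | succ k =>
        have hit : g^[k+1] u = 0 := by
          have h' := hu (List.replicate (k+1) (e+e)) (by simp)
          rwa [chainRep] at h'
        have hEu : e * u = 0 := gkE (k+1) (by omega) u hit
        apply R0 k u hEu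
        intro s hsl _ t ht
        have h' := hu (s ++ [t]) (by simp [hsl])
        rwa [chainMul_append] at h'
  have ClaimS : ∀ C A B : J, φ C = φ A + φ B → e*A = A → (e*B + e*B = B) →
      ∀ t : J, e*t = 0 → t * C = t * B := by
    intro C A B hC hA hB t ht
    have key : ∀ s : List J, s.length = m → chainMul s (t*C - t*B) = 0 := by
      intro s hs
      have h := CLlast C A B hC s t hs
      have htA : t * A = 0 := by rw [mul_comm]; exact P10 A t hA ht
      rw [htA, chainMul_zero, hphi0, zero_add] at h
      rw [chainMul_sub, hinj h, sub_self]
    exact sub_eq_zero.mp (LemmaU m _ key)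
  -- Claim M1h
  have M1h : ∀ C p y : J, e*p = p → (e*y + e*y = y) → φ C = φ p + φ y → C = p + y := by
    intro C p y hp hy hC
    have htC : ∀ t : J, e*t = 0 → t * C = t * y := fun t ht => ClaimS C p y hC hp hy t ht
    have hth : ∀ t : J, e*t = 0 → t * (C - p - y) = 0 := by
      intro t ht
      rw [mul_sub, mul_sub, htC t ht, mul_comm t p, P10 p t hp ht]
      abel
    set h := C - p - y with hdef
    have hkill : ∀ t : J, e*t = 0 →
        t * ((g h + g h + g h + g h) - (g (g h) + g (g h))) = 0 ∧
        t * ((g (g h) + h + h) - (g h + g h + g h)) = 0 := by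
      intro t ht
      have h2h : t * (h + h) = 0 := by rw [mul_add, hth t ht, add_zero]
      have hPk : t * (g (g h) - g h) = 0 := by
        rw [mul_comm]; exact P10 _ t (Edec1 h) ht
      have hαβ : t * ((g h + g h + g h + g h) - (g (g h) + g (g h)))
          + t * ((g (g h) + h + h) - (g h + g h + g h)) = 0 := by
        have hc : t * ((g h + g h + g h + g h) - (g (g h) + g (g h)))
            + t * ((g (g h) + h + h) - (g h + g h + g h))
            = t * (h + h) - t * (g (g h) - g h) := by
          rw [← mul_add, ← mul_sub]
          congr 1
          abel
        rw [hc, h2h, hPk, sub_zero]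
      have hα : e * (t * ((g h + g h + g h + g h) - (g (g h) + g (g h))))
          + e * (t * ((g h + g h + g h + g h) - (g (g h) + g (g h))))
          = t * ((g h + g h + g h + g h) - (g (g h) + g (g h))) :=
        P0h t _ ht (Hdech h)
      have hβ : e * (t * ((g (g h) + h + h) - (g h + g h + g h))) = 0 := by
        rw [comm0 t ht, Edec0 h, mul_zero]
      have hEα : e * (t * ((g h + g h + g h + g h) - (g (g h) + g (g h)))) = 0 := by
        have hcomb : e * (t * ((g h + g h + g h + g h) - (g (g h) + g (g h))))
            + e * (t * ((g (g h) + h + h) - (g h + g h + g h))) = 0 := by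
          rw [← mul_add, hαβ, mul_zero]
        rwa [hβ, add_zero] at hcomb
      have hα0 : t * ((g h + g h + g h + g h) - (g (g h) + g (g h))) = 0 := by
        rw [← hα, hEα, add_zero]
      refine ⟨hα0, ?_⟩
      have := hαβ
      rwa [hα0, zero_add] at this
    have hdh : (g h + g h + g h + g h) - (g (g h) + g (g h)) = 0 :=
      hcond3 _ (Hdech h) (fun t ht => (hkill t ht).1)
    have hd0 : (g (g h) + h + h) - (g h + g h + g h) = 0 :=
      hcond2 _ (Edec0 h) (fun t ht => (hkill t ht).2)
    have h2h1 : h + h = g (g h) - g h := by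
      have hs := decSum h
      rw [hdh, hd0] at hs
      rw [← hs]; abel
    have hwh : ∀ w : J, (e*w + e*w = w) → w * h = 0 := by
      intro w hw
      have i1 := CLw C p y hC w
      have i2 := CLg _ _ _ i1
      have hcomp : ∀ X : J, g^[m+1] (g^[m] X) = g^[(m+1)+m] X := fun X =>
        (Function.iterate_add_apply g (m+1) m X).symm
      rw [hcomp, hcomp, hcomp] at i2
      have hpw : e*(p*w) + e*(p*w) = p*w := P1h p w hp hw
      have hpwfix : g^[(m+1)+m] (p*w) = p*w := hJhit (p*w) hpw _
      rw [hpwfix] at i2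
      have hyw : e*(e*(y*w)) = e*(y*w) := Phh y w hy hw
      have hA : e * (g^[(m+1)+m] (y*w)) = g^[(m+1)+m] (y*w) := K2it (y*w) hyw _ (by omega)
      have i2' : φ (g^[(m+1)+m] (C*w)) = φ (g^[(m+1)+m] (y*w)) + φ (p*w) := by
        rw [i2, add_comm]
      have hts : ∀ t : J, e*t = 0 → t * (g^[(m+1)+m] (C*w)) = t * (p*w) :=
        fun t ht => ClaimS _ _ _ i2' hA hpw t ht
      have hCw : C * w = p*w + y*w + h*w := by
        have hC' : C = p + y + h := by rw [hdef]; abel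
        rw [hC', add_mul, add_mul]
      have hhw : e*(h*w) + e*(h*w) = h*w := by
        have hd1 : e * ((g (g h) - g h) * w) + e * ((g (g h) - g h) * w)
            = (g (g h) - g h) * w := P1h _ w (Edec1 h) hw
        have hdd : (g (g h) - g h) * w = h*w + h*w := by rw [← h2h1, add_mul]
        rw [hdd] at hd1
        rw [mul_add] at hd1
        have key : ((e*(h*w) + e*(h*w)) - h*w) + ((e*(h*w) + e*(h*w)) - h*w)
            = ((e*(h*w) + e*(h*w)) + (e*(h*w) + e*(h*w))) - (h*w + h*w) := by abel
        rw [hd1, sub_self] at key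
        exact sub_eq_zero.mp (h2 _ key)
      have hhwfix : g^[(m+1)+m] (h*w) = h*w := hJhit _ hhw _
      have hexp : g^[(m+1)+m] (C*w) = p*w + g^[(m+1)+m] (y*w) + h*w := by
        rw [hCw, hitadd, hitadd, hpwfix, hhwfix]
      have hfin : ∀ t : J, e*t = 0 → t * (h*w) = 0 := by
        intro t ht
        have h5 := hts t ht
        rw [hexp, mul_add, mul_add] at h5
        have htyw : t * (g^[(m+1)+m] (y*w)) = 0 := by
          rw [mul_comm]; exact P10 _ t hA ht
        rw [htyw, add_zero] at h5
        exact add_eq_left.mp h5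
      have hhw0 : h*w = 0 := hcond3 _ hhw (fun t ht => hfin t ht)
      rw [mul_comm w h]; exact hhw0
    have hd1 : g (g h) - g h = 0 := by
      apply hcond1 _ (Edec1 h)
      intro w hw
      have : w * (h + h) = 0 := by rw [mul_add, hwh w hw, add_zero]
      rwa [h2h1] at this
    have hh0 : h = 0 := by
      apply h2
      rw [h2h1, hd1]
    have : C - p - y = 0 := hh0
    rw [sub_sub] at this
    exact sub_eq_zero.mp this
  have M1hF : ∀ p y : J, e*p = p → (e*y + e*y = y) → φ (p + y) = φ p + φ y := by
    intro p y hp hy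
    obtain ⟨c', hc'⟩ := hbij.surjective (φ p + φ y)
    rw [← M1h c' p y hp hy hc', hc']
  -- Claim Mh0
  have Mh0 : ∀ C y q : J, (e*y + e*y = y) → e*q = 0 → φ C = φ y + φ q → C = y + q := by
    intro C y q hy hq hC
    have hgy : g y = y := by rw [hg]; exact hy
    have hgq : g q = 0 := by rw [hg, hq, add_zero]
    have hgC : g C = y := by
      have key : ∀ s : List J, s.length = m → chainMul s (g C - y) = 0 := by
        intro s hs
        have h := CLlast C y q hC s (e+e) hs
        have h2e : ∀ X : J, (e+e) * X = g X := by intro X; rw [add_mul, hg]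
        rw [h2e, h2e, h2e, hgy, hgq, chainMul_zero, hphi0, add_zero] at h
        rw [chainMul_sub, hinj h, sub_self]
      exact sub_eq_zero.mp (LemmaU m _ key)
    have hEh : e * (C - y - q) = 0 := by
      have hgh : g (C - y - q) = 0 := by
        rw [hgsub, hgsub, hgC, hgy, hgq, sub_zero, sub_self]
      rw [hg] at hgh
      exact h2 _ hgh
    set h := C - y - q with hdef
    have hwh : ∀ w : J, (e*w + e*w = w) → h * w = 0 := by
      intro w hw
      have i1 := CLw C y q hC w
      have i2 := CLg _ _ _ i1
      have hcomp : ∀ X : J, g^[m+1] (g^[m] X) = g^[(m+1)+m] X := fun X =>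
        (Function.iterate_add_apply g (m+1) m X).symm
      rw [hcomp, hcomp, hcomp] at i2
      have hqw : e*(q*w) + e*(q*w) = q*w := P0h q w hq hw
      have hqwfix : g^[(m+1)+m] (q*w) = q*w := hJhit _ hqw _
      rw [hqwfix] at i2
      have hyw : e*(e*(y*w)) = e*(y*w) := Phh y w hy hw
      have hA : e * (g^[(m+1)+m] (y*w)) = g^[(m+1)+m] (y*w) := K2it (y*w) hyw _ (by omega)
      have hts : ∀ t : J, e*t = 0 → t * (g^[(m+1)+m] (C*w)) = t * (q*w) :=
        fun t ht => ClaimS _ _ _ i2 hA hqw t ht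
      have hCw : C * w = y*w + q*w + h*w := by
        have hC' : C = y + q + h := by rw [hdef]; abel
        rw [hC', add_mul, add_mul]
      have hhw : e*(h*w) + e*(h*w) = h*w := P0h h w hEh hw
      have hexp : g^[(m+1)+m] (C*w) = g^[(m+1)+m] (y*w) + q*w + h*w := by
        rw [hCw, hitadd, hitadd, hqwfix, hJhit _ hhw]
      have hfin : ∀ t : J, e*t = 0 → t * (h*w) = 0 := by
        intro t ht
        have h5 := hts t ht
        rw [hexp, mul_add, mul_add] at h5
        have htyw : t * (g^[(m+1)+m] (y*w)) = 0 := by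
          rw [mul_comm]; exact P10 _ t hA ht
        rw [htyw, zero_add] at h5
        exact add_eq_left.mp h5
      exact hcond3 _ hhw (fun t ht => hfin t ht)
    have hh0 : h = 0 :=
      hcond1' h hEh (fun t ht => by rw [mul_comm]; exact hwh t ht)
    have : C - y - q = 0 := hh0
    rw [sub_sub] at this
    exact sub_eq_zero.mp this
  have Mh0F : ∀ y q : J, (e*y + e*y = y) → e*q = 0 → φ (y + q) = φ y + φ q := by
    intro y q hy hq
    obtain ⟨c', hc'⟩ := hbij.surjective (φ y + φ q)
    rw [← Mh0 c' y q hy hq hc', hc']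
  -- Claim Mhv
  have Mhv : ∀ C Y v : J, (e*Y + e*Y = Y) → e*(e*v) = e*v → φ C = φ Y + φ v → C = Y + v := by
    intro C Y v hY hv hC
    have i1 := CLg C Y v hC
    rw [hJhit Y hY] at i1
    have hA : e * (g^[m+1] v) = g^[m+1] v := K2it v hv _ (by omega)
    have h1 : g^[m+1] C = g^[m+1] v + Y := M1h _ _ _ hA hY (by rw [i1, add_comm])
    set h := C - Y - v with hdef
    have hEh : e * h = 0 := by
      apply gkE (m+1) (by omega)
      rw [hdef, hitsub, hitsub, h1, hJhit Y hY]
      abel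
    have hh0 : h = 0 := by
      apply R0 m h hEh
      intro s hs hse t ht
      have hY' : e * chainMul s (t*Y) + e * chainMul s (t*Y) = chainMul s (t*Y) :=
        chainJh s hse _ (P0h t Y ht hY)
      have hq' : e * chainMul s (t*v) = 0 := chainJ0 s hse _ (K2J0mul t v ht hv)
      have hrel := CLlast C Y v hC s t hs
      have heq := Mh0 _ _ _ hY' hq' hrel
      have hsplit : t * h = t*C - t*Y - t*v := by
        rw [hdef, mul_sub, mul_sub]
      rw [hsplit, chainMul_sub, chainMul_sub, heq]
      abel
    have : C - Y - v = 0 := hh0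
    rw [sub_sub] at this
    exact sub_eq_zero.mp this
  have MhvF : ∀ Y v : J, (e*Y + e*Y = Y) → e*(e*v) = e*v → φ (Y + v) = φ Y + φ v := by
    intro Y v hY hv
    obtain ⟨c', hc'⟩ := hbij.surjective (φ Y + φ v)
    rw [← Mhv c' Y v hY hv hc', hc']
  -- special pairs (w*a, w*b), shared w
  have SP : ∀ w a' b' : J, (e*w + e*w = w) → e*a' = 0 → e*b' = 0 →
      φ (w*a' + w*b') = φ (w*a') + φ (w*b') := by
    intro w a' b' hw ha' hb'
    have hwa : e*(w*a') + e*(w*a') = w*a' := by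
      rw [mul_comm w a']; exact P0h a' w ha' hw
    have hwb : e*(w*b') + e*(w*b') = w*b' := by
      rw [mul_comm w b']; exact P0h b' w hb' hw
    have hU : φ (w + (e+e)) = φ w + φ (e+e) := by
      have h2e1 : e*(e+e) = e+e := by rw [mul_add, hid]
      have h' := M1hF (e+e) w h2e1 hw
      rw [add_comm (e+e) w] at h'
      rw [add_comm (φ (e+e)) (φ w)] at h'
      exact h'
    have hV : φ (a' + w*b') = φ (w*b') + φ a' := by
      have h' := Mh0F (w*b') a' hwb ha'
      rw [add_comm (w*b') a'] at h'
      exact h'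
    have key : ∀ X Y : J, chainMul (List.replicate m (φ (e+e))) (φ X * φ Y)
        = φ (g^[m] (X * Y)) := by
      intro X Y
      have hlen2 : (List.replicate m (e+e) ++ [X, Y]).length = m + 2 := by simp
      have h := hmul _ hlen2
      rw [rnm_append _ _ (by simp), rnm_pair, chainRep] at h
      rw [List.map_append, List.map_replicate] at h
      simp only [List.map_cons, List.map_nil] at h
      rw [rnm_append _ _ (by simp), rnm_pair] at h
      exact h.symm
    have hmain := hmul (List.replicate m (e+e) ++ [w + (e+e), a' + w*b']) (by simp)
    rw [rnm_append _ _ (by simp), rnm_pair, chainRep] at hmain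
    rw [List.map_append, List.map_replicate] at hmain
    simp only [List.map_cons, List.map_nil] at hmain
    rw [rnm_append _ _ (by simp), rnm_pair] at hmain
    rw [hU, hV] at hmain
    have hexpand : (φ w + φ (e+e)) * (φ (w*b') + φ a')
        = φ w * φ (w*b') + φ w * φ a' + (φ (e+e) * φ (w*b') + φ (e+e) * φ a') := by
      rw [add_mul, mul_add, mul_add]
    rw [hexpand] at hmain
    rw [chainMul_add, chainMul_add, chainMul_add] at hmain
    rw [key, key, key, key] at hmain
    have e2a : (e+e) * a' = 0 := by rw [add_mul, ha', add_zero]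
    have e2wb : (e+e) * (w*b') = w*b' := by rw [add_mul]; exact hwb
    have fwa : g^[m] (w*a') = w*a' := hJhit _ hwa m
    have fwb : g^[m] (w*b') = w*b' := hJhit _ hwb m
    rw [e2a, e2wb] at hmain
    rw [hitzero, hphi0] at hmain
    rw [fwa, fwb] at hmain
    have hprod : (w + (e+e)) * (a' + w*b') = (w*a' + w*b') + w*(w*b') := by
      rw [add_mul, mul_add, mul_add, e2a, e2wb]
      abel
    rw [hprod, hitadd] at hmain
    have hYsum : e*(w*a' + w*b') + e*(w*a' + w*b') = w*a' + w*b' := by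
      rw [mul_add]
      have key2 : (e*(w*a') + e*(w*b')) + (e*(w*a') + e*(w*b'))
          = (e*(w*a') + e*(w*a')) + (e*(w*b') + e*(w*b')) := by abel
      rw [key2, hwa, hwb]
    rw [hJhit _ hYsum m] at hmain
    have hVK2 : e*(e*(g^[m] (w*(w*b')))) = e*(g^[m] (w*(w*b'))) :=
      K2K2 _ (Phh w (w*b') hw hwb) m
    rw [MhvF (w*a' + w*b') (g^[m] (w*(w*b'))) hYsum hVK2] at hmain
    have keyfin : φ (w*a' + w*b') - (φ (w*a') + φ (w*b'))
        = (φ (w*a' + w*b') + φ (g^[m] (w*(w*b'))))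
          - (φ (g^[m] (w*(w*b'))) + φ (w*a') + (φ (w*b') + 0)) := by abel
    rw [hmain, sub_self] at keyfin
    exact sub_eq_zero.mp keyfin
  -- final goal
  intro a ha b hb
  have ha' : e * a = 0 := ha
  have hb' : e * b = 0 := hb
  obtain ⟨c, hc⟩ := hbij.surjective (φ a + φ b)
  suffices hcab : c = a + b by rw [← hcab, hc]
  have hca := CLg c a b hc
  rw [hJ0it a ha' (m+1) (by omega), hJ0it b hb' (m+1) (by omega), hphi0, add_zero] at hca
  have hgc : g^[m+1] c = 0 := hinj (by rw [hca, hphi0])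
  have hc0 : e * c = 0 := gkE (m+1) (by omega) c hgc
  have hB : ∀ w : J, (e*w + e*w = w) → c * w = a*w + b*w := by
    intro w hw
    have i1 := CLw c a b hc w
    have fcw : g^[m] (c*w) = c*w := hJhit _ (P0h c w hc0 hw) m
    have faw : g^[m] (a*w) = a*w := hJhit _ (P0h a w ha' hw) m
    have fbw : g^[m] (b*w) = b*w := hJhit _ (P0h b w hb' hw) m
    rw [fcw, faw, fbw] at i1
    have hsp := SP w a b hw ha' hb'
    rw [mul_comm w a, mul_comm w b] at hsp
    rw [← hsp] at i1
    exact hinj i1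
  have hd : c - (a + b) = 0 := by
    apply hcond1' _ (show e * (c - (a + b)) = 0 by
      rw [mul_sub, mul_add, hc0, ha', hb']; simp)
    intro t ht
    rw [mul_sub, mul_comm t c, hB t ht, mul_add, mul_comm t a, mul_comm t b, sub_self]
  rwa [sub_eq_zero] at hd
end

section
/- Theorem: Let J and J' be Jordan rings, J 2-torsion free with a nontrivial idempotent e and Peirce decomposition J = J₁ ⊕ J_{1/2} ⊕ J₀. Suppose (i) for a_i ∈ J_i (i = 1, 0), t a_i = 0 for all t ∈ J_{1/2} implies a_i = 0; (ii) for a₀ ∈ J₀, t a₀ = 0 for all t ∈ J₀ implies a₀ = 0; (iii) for a ∈ J_{1/2}, t a = 0 for all t ∈ J₀ implies a = 0. Then every n-multiplicative isomorphism φ : J → J' (n ≥ 2) is additive: φ(a + b) = φ(a) + φ(b) for all a, b ∈ J. -/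
set_option linter.unusedSectionVars false
set_option maxHeartbeats 1000000

namespace NMul
section Generic
variable {J : Type*} [NonUnitalNonAssocCommRing J]

def inJ1 (e x : J) : Prop := e * x = x
def inJh (e x : J) : Prop := e * x + e * x = x
def inJ0 (e x : J) : Prop := e * x = 0

def Lp (e : J) (m : ℕ) (x : J) : J := (fun y => e * y)^[m] x

lemma Lp_zro (e x : J) : Lp e 0 x = x := rfl
lemma Lp_one (e x : J) : Lp e 1 x = e * x := rfl
lemma Lp_succ (e : J) (m : ℕ) (x : J) : Lp e (m+1) x = Lp e m (e * x) :=
  Function.iterate_succ_apply _ _ _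
lemma Lp_succ' (e : J) (m : ℕ) (x : J) : Lp e (m+1) x = e * Lp e m x :=
  Function.iterate_succ_apply' _ _ _
lemma Lp_comp (e : J) (a b : ℕ) (x : J) : Lp e a (Lp e b x) = Lp e (a+b) x :=
  (Function.iterate_add_apply _ a b x).symm

lemma Lp_add (e : J) (m : ℕ) (x y : J) : Lp e m (x + y) = Lp e m x + Lp e m y := by
  induction m with
  | zero => rfl
  | succ m ih => rw [Lp_succ', Lp_succ', Lp_succ', ih, mul_add]

lemma Lp_sub (e : J) (m : ℕ) (x y : J) : Lp e m (x - y) = Lp e m x - Lp e m y := by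
  induction m with
  | zero => rfl
  | succ m ih => rw [Lp_succ', Lp_succ', Lp_succ', ih, mul_sub]

lemma Lp_zero (e : J) (m : ℕ) : Lp e m (0:J) = 0 := by
  induction m with
  | zero => rfl
  | succ m ih => rw [Lp_succ', ih, mul_zero]

lemma Lp_zeroLeft (m : ℕ) (x : J) : Lp (0:J) (m+1) x = 0 := by
  rw [Lp_succ', zero_mul]

lemma mul_nsmul_left (a b : J) (m : ℕ) : a * (m • b) = m • (a * b) := by
  simpa using (AddMonoidHom.mulLeft a).map_nsmul m b

lemma mul_nsmul_right (a b : J) (m : ℕ) : (m • a) * b = m • (a * b) := by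
  simpa using (AddMonoidHom.mulRight b).map_nsmul m a

lemma Lp_nsmul (e : J) (m c : ℕ) (x : J) : Lp e m (c • x) = c • Lp e m x := by
  induction m with
  | zero => rfl
  | succ m ih => rw [Lp_succ', Lp_succ', ih, mul_nsmul_left]

lemma Lp_e (e : J) (hid : e * e = e) (m : ℕ) : Lp e m e = e := by
  induction m with
  | zero => rfl
  | succ m ih => rw [Lp_succ', ih, hid]

lemma LpJ1 (e u : J) (hu : inJ1 e u) (m : ℕ) : Lp e m u = u := by
  induction m with
  | zero => rfl
  | succ m ih => rw [Lp_succ', ih, hu]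

lemma LpJ0 (e w : J) (hw : inJ0 e w) (m : ℕ) : Lp e (m+1) w = 0 := by
  rw [Lp_succ, hw, Lp_zero]

section WithH2
variable {e : J} (h2 : ∀ x : J, x + x = 0 → x = 0)
include h2

lemma cancel2 (a b : J) (h : a + a = b + b) : a = b := by
  have h3 : (a - b) + (a - b) = 0 := by
    have : (a - b) + (a - b) = (a+a) - (b+b) := by abel
    rw [this, h, sub_self]
  exact sub_eq_zero.mp (h2 _ h3)

lemma cancel2_smul (a b : J) (h : 2 • a = 2 • b) : a = b := by
  apply cancel2 h2; simpa [two_smul] using h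

lemma cancel_pow2 (m : ℕ) (a b : J) (h : 2^m • a = 2^m • b) : a = b := by
  induction m generalizing a b with
  | zero => simpa using h
  | succ m ih =>
    apply cancel2_smul h2
    apply ih
    rw [pow_succ, mul_smul, mul_smul] at h
    exact h
end WithH2

section Jordan
variable {e : J} (hJ : ∀ x y : J, ((x * x) * y) * x = (x * x) * (y * x))
  (h2 : ∀ x : J, x + x = 0 → x = 0) (hid : e * e = e)
include hJ h2 hid

lemma lin1 (y z : J) :
    (e*y)*z + (((e*z)*y)*e + ((e*z)*y)*e) = e*(y*z) + ((e*z)*(y*e) + (e*z)*(y*e)) := by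
  apply cancel2 h2
  have hsq : (e+z)*(e+z) = e + (e*z + e*z + z*z) := by
    rw [add_mul, mul_add, mul_add, hid, mul_comm z e]; abel
  have hsq' : (e-z)*(e-z) = e + (z*z - (e*z + e*z)) := by
    rw [sub_mul, mul_sub, mul_sub, hid, mul_comm z e]; abel
  have h₁ := hJ (e+z) y
  have h₂ := hJ (e-z) y
  have h₃ := hJ z y
  rw [hsq] at h₁
  rw [hsq'] at h₂
  simp only [add_mul, mul_add, sub_mul, mul_sub] at h₁ h₂
  linear_combination (norm := abel) h₁ - h₂ - h₃ - h₃

lemma lin2 (y z : J) :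
    (((e*z)*y)*z + ((e*z)*y)*z) + ((z*z)*y)*e = ((e*z)*(y*z) + (e*z)*(y*z)) + (z*z)*(y*e) := by
  apply cancel2 h2
  have hsq : (e+z)*(e+z) = e + (e*z + e*z + z*z) := by
    rw [add_mul, mul_add, mul_add, hid, mul_comm z e]; abel
  have hsq' : (e-z)*(e-z) = e + (z*z - (e*z + e*z)) := by
    rw [sub_mul, mul_sub, mul_sub, hid, mul_comm z e]; abel
  have h₁ := hJ (e+z) y
  have h₂ := hJ (e-z) y
  have h₀ := hJ e y
  rw [hsq] at h₁
  rw [hsq'] at h₂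
  rw [hid] at h₀
  simp only [add_mul, mul_add, sub_mul, mul_sub] at h₁ h₂
  linear_combination (norm := abel) h₁ + h₂ - h₀ - h₀

lemma opid (z : J) :
    e*z + (e*(e*(e*z)) + e*(e*(e*z))) = e*(e*z) + (e*(e*z) + e*(e*z)) := by
  have h := lin1 hJ h2 hid e z
  rw [hid] at h
  rw [mul_comm (e*z) e] at h
  rw [mul_comm (e*(e*z)) e] at h
  exact h

/-- J1 · J0 = 0 -/
lemma p2 (u w : J) (hu : inJ1 e u) (hw : inJ0 e w) : u * w = 0 := by
  have h1 := lin1 hJ h2 hid w u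
  rw [hw, hu] at h1
  rw [zero_mul, mul_comm w e, hw, mul_zero, mul_comm (u*w) e, mul_comm w u] at h1
  have hL : e*(u*w) = 0 := by linear_combination (norm := abel) h1
  have h3 := lin1 hJ h2 hid u w
  rw [hw, hu, zero_mul, zero_mul, mul_comm u e, hu] at h3
  rw [hL] at h3
  simpa using h3

/-- J1 · Jh ⊆ Jh -/
lemma p3 (u t : J) (hu : inJ1 e u) (ht : inJh e t) : inJh e (t * u) := by
  have h := lin1 hJ h2 hid t u
  rw [hu] at h
  rw [mul_comm u t, mul_comm (t*u) e, mul_comm t e] at h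
  have d1 : (e*t)*u + (e*t)*u = t*u := by rw [← add_mul, ht]
  have d2 : u*(e*t) + u*(e*t) = t*u := by rw [← mul_add, ht, mul_comm]
  show e * (t*u) + e * (t*u) = t*u
  linear_combination (norm := abel) h + h - d1 + d2 + d2

/-- J0 · Jh ⊆ Jh -/
lemma p4 (w t : J) (hw : inJ0 e w) (ht : inJh e t) : inJh e (w * t) := by
  have h := lin1 hJ h2 hid t w
  rw [hw, zero_mul, zero_mul, zero_mul, mul_comm t w] at h
  have d1 : (e*t)*w + (e*t)*w = w*t := by rw [← add_mul, ht, mul_comm]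
  show e * (w*t) + e * (w*t) = w*t
  linear_combination (norm := abel) d1 - h - h

/-- J0 · J0 ⊆ J0 -/
lemma p5 (w w' : J) (hw : inJ0 e w) (hw' : inJ0 e w') : inJ0 e (w * w') := by
  have h := lin1 hJ h2 hid w w'
  rw [hw, hw', zero_mul, zero_mul, zero_mul, mul_comm w e, hw, mul_zero] at h
  show e * (w * w') = 0
  linear_combination (norm := abel) - h

lemma p6sq (t : J) (ht : inJh e t) : e*(e*(t*t)) = e*(t*t) := by
  have h := lin2 hJ h2 hid e t
  rw [hid] at h
  rw [mul_comm (e*t) e, mul_comm (t*t) e, mul_comm (e*(t*t)) e] at h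
  have d1 : e*(e*t) + e*(e*t) = e*t := by rw [← mul_add, ht]
  have d2 : (e*(e*t))*t + (e*(e*t))*t = (e*t)*t := by rw [← add_mul, d1]
  have d4 : (e*t)*(e*t) + (e*t)*(e*t) = (e*t)*t := by rw [← mul_add, ht]
  linear_combination (norm := abel) h - d2 + d4

lemma inJh_add (t s : J) (ht : inJh e t) (hs : inJh e s) : inJh e (t + s) := by
  have ht' : e*t + e*t = t := ht
  have hs' : e*s + e*s = s := hs
  show e*(t+s) + e*(t+s) = t+s
  rw [mul_add]
  linear_combination (norm := abel) ht' + hs'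

lemma p6 (t s : J) (ht : inJh e t) (hs : inJh e s) : e*(e*(t*s)) = e*(t*s) := by
  have hts := p6sq hJ h2 hid (t+s) (inJh_add hJ h2 hid t s ht hs)
  have h1 := p6sq hJ h2 hid t ht
  have h2' := p6sq hJ h2 hid s hs
  have hexp : (t+s)*(t+s) = t*t + (t*s + t*s) + s*s := by
    rw [add_mul, mul_add, mul_add, mul_comm s t]; abel
  rw [hexp] at hts
  simp only [mul_add] at hts
  apply cancel2 h2
  linear_combination (norm := abel) hts - h1 - h2'

/-- decomposition of a product of two Jh elements -/
lemma p6dec (t s : J) (ht : inJh e t) (hs : inJh e s) :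
    inJ1 e (e*(t*s)) ∧ inJ0 e (t*s - e*(t*s)) ∧ t*s = e*(t*s) + (t*s - e*(t*s)) := by
  refine ⟨p6 hJ h2 hid t s ht hs, ?_, by abel⟩
  show e * (t*s - e*(t*s)) = 0
  rw [mul_sub, p6 hJ h2 hid t s ht hs, sub_self]

/-- Peirce decomposition -/
lemma decomp (x : J) : ∃ u v w : J, inJ1 e u ∧ inJh e v ∧ inJ0 e w ∧ x = u + v + w := by
  refine ⟨(e*(e*x) + e*(e*x)) - e*x,
          ((e*x + e*x) + (e*x + e*x)) - ((e*(e*x) + e*(e*x)) + (e*(e*x) + e*(e*x))),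
          (x - (e*x + e*x + e*x)) + (e*(e*x) + e*(e*x)), ?_, ?_, ?_, by abel⟩
  · show e * _ = _
    have h := opid hJ h2 hid x
    simp only [mul_sub, mul_add]
    linear_combination (norm := abel) h
  · show e * _ + e * _ = _
    have h := opid hJ h2 hid x
    simp only [mul_sub, mul_add]
    linear_combination (norm := abel) - h - h - h - h
  · show e * _ = 0
    have h := opid hJ h2 hid x
    simp only [mul_sub, mul_add]
    linear_combination (norm := abel) h
end Jordan

section JhHelpers
variable {e : J}

lemma inJ1_zero : inJ1 e (0:J) := by show e*0 = 0; rw [mul_zero]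
lemma inJ0_zero : inJ0 e (0:J) := by show e*0 = 0; rw [mul_zero]
lemma inJh_zero : inJh e (0:J) := by show e*0 + e*0 = 0; rw [mul_zero, add_zero]
lemma inJh_sub (t s : J) (ht : inJh e t) (hs : inJh e s) : inJh e (t - s) := by
  have ht' : e*t + e*t = t := ht
  have hs' : e*s + e*s = s := hs
  show e*(t-s) + e*(t-s) = t-s
  rw [mul_sub]
  linear_combination (norm := abel) ht' - hs'
lemma inJ1_sub (t s : J) (ht : inJ1 e t) (hs : inJ1 e s) : inJ1 e (t - s) := by
  show e*(t-s) = t-s; rw [mul_sub, ht, hs]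
lemma inJ0_sub (t s : J) (ht : inJ0 e t) (hs : inJ0 e s) : inJ0 e (t - s) := by
  show e*(t-s) = 0; rw [mul_sub, ht, hs, sub_zero]
lemma inJh_nsmul (c : ℕ) (t : J) (ht : inJh e t) : inJh e (c • t) := by
  show e*(c • t) + e*(c • t) = c • t
  rw [mul_nsmul_left, ← smul_add, ht]
lemma inJh_L (t : J) (ht : inJh e t) : inJh e (e * t) := by
  show e*(e*t) + e*(e*t) = e*t
  rw [← mul_add, ht]
lemma inJh_Lp (m : ℕ) (t : J) (ht : inJh e t) : inJh e (Lp e m t) := by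
  induction m with
  | zero => exact ht
  | succ m ih => rw [Lp_succ']; exact inJh_L _ ih
lemma inJ0_Lp (m : ℕ) (t : J) (ht : inJ0 e t) : inJ0 e (Lp e m t) := by
  induction m with
  | zero => exact ht
  | succ m ih => rw [Lp_succ']; show e * (e * Lp e m t) = 0; rw [ih, mul_zero]

lemma Jh_pow2 (m : ℕ) (t : J) (ht : inJh e t) : 2^m • Lp e m t = t := by
  induction m with
  | zero => rw [pow_zero, one_smul]; rfl
  | succ m ih =>
    rw [Lp_succ, pow_succ, mul_smul]
    have h' : (2:ℕ) • (e * t) = t := by rw [two_smul]; exact ht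
    rw [show (2:ℕ) • Lp e m (e*t) = Lp e m t from by rw [← Lp_nsmul, h']]
    exact ih

lemma Jh_Lp_cancel (m : ℕ) (t : J) (ht : inJh e t) (h : Lp e m t = 0) : t = 0 := by
  have := Jh_pow2 (e := e) m t ht
  rw [h, smul_zero] at this
  exact this.symm

lemma Lp_pow2_smul (m : ℕ) (t : J) (ht : inJh e t) : Lp e m (2^m • t) = t := by
  rw [Lp_nsmul]
  exact Jh_pow2 m t ht

lemma hl_swap (h2 : ∀ x : J, x + x = 0 → x = 0)
    (hJ : ∀ x y : J, ((x * x) * y) * x = (x * x) * (y * x)) (hid : e * e = e)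
    (s t : J) (hs : inJ0 e s) (ht : inJh e t) : e * (s * t) = s * (e * t) := by
  apply cancel2 h2
  have h1 : e*(s*t) + e*(s*t) = s*t := p4 hJ h2 hid s t hs ht
  have h2' : s*(e*t) + s*(e*t) = s*t := by rw [← mul_add, ht]
  rw [h1, h2']

lemma Lp_swap (h2 : ∀ x : J, x + x = 0 → x = 0)
    (hJ : ∀ x y : J, ((x * x) * y) * x = (x * x) * (y * x)) (hid : e * e = e)
    (m : ℕ) (s t : J) (hs : inJ0 e s) (ht : inJh e t) : Lp e m (s * t) = s * Lp e m t := by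
  induction m with
  | zero => rfl
  | succ m ih =>
    rw [Lp_succ', Lp_succ', ih, hl_swap h2 hJ hid s _ hs (inJh_Lp m t ht)]
end JhHelpers

section Rnm
variable {J₀ : Type*} [NonUnitalNonAssocCommRing J₀]

lemma rnm_cons_ne (x : J₀) (l : List J₀) (h : l ≠ []) : rnm (x :: l) = x * rnm l := by
  cases l with
  | nil => exact absurd rfl h
  | cons y t => rfl

lemma rnm_singleton (x : J₀) : rnm [x] = x := rfl

lemma rnm_replicate (m : ℕ) (a : J₀) (l : List J₀) (h : l ≠ []) :
    rnm (List.replicate m a ++ l) = Lp a m (rnm l) := by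
  induction m with
  | zero => rfl
  | succ m ih =>
    rw [List.replicate_succ, List.cons_append,
      rnm_cons_ne _ _ (by simp [h]), ih, Lp_succ']

lemma rnm_add_slot (p q : List J₀) (x y : J₀) :
    rnm (p ++ (x + y) :: q) = rnm (p ++ x :: q) + rnm (p ++ y :: q) := by
  induction p with
  | nil =>
    cases q with
    | nil => simp [rnm]
    | cons z t =>
      show rnm ((x+y) :: z :: t) = rnm (x :: z :: t) + rnm (y :: z :: t)
      show (x+y) * rnm (z :: t) = x * rnm (z :: t) + y * rnm (z :: t)
      rw [add_mul]
  | cons a p ih =>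
    have hne : ∀ u : J₀, p ++ u :: q ≠ [] := by simp
    rw [List.cons_append, List.cons_append, List.cons_append,
        rnm_cons_ne _ _ (hne _), rnm_cons_ne _ _ (hne _), rnm_cons_ne _ _ (hne _), ih, mul_add]
end Rnm
end Generic
end NMul

open NMul

theorem nMulIso_additive {J J' : Type*} [NonUnitalNonAssocCommRing J] [NonUnitalNonAssocCommRing J']
    (hJordan : ∀ x y : J, ((x * x) * y) * x = (x * x) * (y * x))
    (hJordan' : ∀ x y : J', ((x * x) * y) * x = (x * x) * (y * x))
    (h2 : ∀ x : J, x + x = 0 → x = 0)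
    (e : J) (hid : e * e = e) (hne : e ≠ 0) (hnu : ∃ x : J, e * x ≠ x)
    (hcond1 : ∀ a ∈ peirce1 e, (∀ t ∈ peirceHalf e, t * a = 0) → a = 0)
    (hcond1' : ∀ a ∈ peirce0 e, (∀ t ∈ peirceHalf e, t * a = 0) → a = 0)
    (hcond2 : ∀ a ∈ peirce0 e, (∀ t ∈ peirce0 e, t * a = 0) → a = 0)
    (hcond3 : ∀ a ∈ peirceHalf e, (∀ t ∈ peirce0 e, t * a = 0) → a = 0)
    (n : ℕ) (hn : 2 ≤ n) (φ : J → J')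
    (hbij : Function.Bijective φ) (hmul : IsNMulMap n φ) :
    ∀ a b : J, φ (a + b) = φ a + φ b := by
  intro a b
  obtain ⟨k, rfl⟩ : ∃ k, n = k + 2 := ⟨n - 2, by omega⟩
  have hinj := hbij.1
  have hsurj := hbij.2
  -- conditions in inJ form
  have hc1 : ∀ x : J, inJ1 e x → (∀ t : J, inJh e t → t * x = 0) → x = 0 :=
    fun x hx h => hcond1 x hx (fun t ht => h t ht)
  have hc1' : ∀ x : J, inJ0 e x → (∀ t : J, inJh e t → t * x = 0) → x = 0 :=
    fun x hx h => hcond1' x hx (fun t ht => h t ht)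
  have hc2 : ∀ x : J, inJ0 e x → (∀ t : J, inJ0 e t → t * x = 0) → x = 0 :=
    fun x hx h => hcond2 x hx (fun t ht => h t ht)
  have hc3 : ∀ x : J, inJh e x → (∀ t : J, inJ0 e t → t * x = 0) → x = 0 :=
    fun x hx h => hcond3 x hx (fun t ht => h t ht)
  have hide : inJ1 e e := hid
  -- φ 0 = 0
  have phi0 : φ (0:J) = 0 := by
    obtain ⟨z, hz⟩ := hsurj 0
    have h := hmul (List.replicate (k+1) z ++ [(0:J)]) (by simp)
    rw [rnm_replicate _ _ _ (by simp), rnm_singleton, Lp_zero] at h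
    rw [List.map_append, List.map_replicate] at h
    simp only [List.map_cons, List.map_nil] at h
    rw [rnm_replicate _ _ _ (by simp), rnm_singleton, hz, Lp_zeroLeft] at h
    exact h
  -- D-step engine
  have Dstep : ∀ p : List J, p.length = k+1 → ∀ γ α β : J, φ γ = φ α + φ β →
      φ (rnm (p ++ [γ])) = φ (rnm (p ++ [α])) + φ (rnm (p ++ [β])) := by
    intro p hp γ α β h
    rw [hmul _ (by simp [hp]), hmul _ (by simp [hp]), hmul _ (by simp [hp])]
    simp only [List.map_append, List.map_cons, List.map_nil]
    rw [h]
    exact rnm_add_slot _ [] _ _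
  have Dstep3 : ∀ p : List J, p.length = k+1 → ∀ γ α β δ : J, φ γ = φ α + φ β + φ δ →
      φ (rnm (p ++ [γ])) = φ (rnm (p ++ [α])) + φ (rnm (p ++ [β])) + φ (rnm (p ++ [δ])) := by
    intro p hp γ α β δ h
    rw [hmul _ (by simp [hp]), hmul _ (by simp [hp]), hmul _ (by simp [hp]), hmul _ (by simp [hp])]
    simp only [List.map_append, List.map_cons, List.map_nil]
    rw [h, rnm_add_slot _ [] (φ α + φ β) (φ δ), rnm_add_slot _ [] (φ α) (φ β)]
  -- value-level single test closures
  have WT_K : ∀ s x : J, rnm ((List.replicate k e ++ [s]) ++ [x]) = Lp e k (s*x) := by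
    intro s x
    rw [List.append_assoc, rnm_replicate _ _ _ (by simp)]
    rfl
  have WT_M : ∀ x : J, rnm (List.replicate (k+1) e ++ [x]) = Lp e (k+1) x := by
    intro x
    rw [rnm_replicate _ _ _ (by simp), rnm_singleton]
  have WT_A : ∀ t x : J, rnm ((t :: List.replicate k e) ++ [x]) = t * Lp e k x := by
    intro t x
    rw [List.cons_append, rnm_cons_ne _ _ (by simp), rnm_replicate _ _ _ (by simp), rnm_singleton]
  have DK : ∀ s γ α β : J, φ γ = φ α + φ β →
      φ (Lp e k (s*γ)) = φ (Lp e k (s*α)) + φ (Lp e k (s*β)) := by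
    intro s γ α β h
    have := Dstep (List.replicate k e ++ [s]) (by simp) γ α β h
    rwa [WT_K, WT_K, WT_K] at this
  have DM : ∀ γ α β : J, φ γ = φ α + φ β →
      φ (Lp e (k+1) γ) = φ (Lp e (k+1) α) + φ (Lp e (k+1) β) := by
    intro γ α β h
    have := Dstep (List.replicate (k+1) e) (by simp) γ α β h
    rwa [WT_M, WT_M, WT_M] at this
  have DA : ∀ t γ α β : J, φ γ = φ α + φ β →
      φ (t * Lp e k γ) = φ (t * Lp e k α) + φ (t * Lp e k β) := by
    intro t γ α β h
    have := Dstep (t :: List.replicate k e) (by simp) γ α β h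
    rwa [WT_A, WT_A, WT_A] at this
  have DK3 : ∀ s γ α β δ : J, φ γ = φ α + φ β + φ δ →
      φ (Lp e k (s*γ)) = φ (Lp e k (s*α)) + φ (Lp e k (s*β)) + φ (Lp e k (s*δ)) := by
    intro s γ α β δ h
    have := Dstep3 (List.replicate k e ++ [s]) (by simp) γ α β δ h
    rwa [WT_K, WT_K, WT_K, WT_K] at this
  have DM3 : ∀ γ α β δ : J, φ γ = φ α + φ β + φ δ →
      φ (Lp e (k+1) γ) = φ (Lp e (k+1) α) + φ (Lp e (k+1) β) + φ (Lp e (k+1) δ) := by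
    intro γ α β δ h
    have := Dstep3 (List.replicate (k+1) e) (by simp) γ α β δ h
    rwa [WT_M, WT_M, WT_M, WT_M] at this
  -- value computations for composite tests
  have WSval : ∀ s x u v w : J, inJ0 e s → inJ1 e u → inJh e v → inJ0 e w → x = u + v + w →
      Lp e (k+1) (Lp e k (s*x)) = s * Lp e (2*k+1) v := by
    intro s x u v w hs hu hv hw hx
    have h1 : s * x = s*v + s*w := by
      rw [hx, mul_add, mul_add, mul_comm s u, p2 hJordan h2 hid u s hu hs, zero_add]
    rw [h1, Lp_add, Lp_add, Lp_comp, Lp_comp]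
    have e1 : k+1+k = 2*k+1 := by omega
    rw [e1]
    rw [Lp_swap h2 hJordan hid _ s v hs hv]
    have e2 : 2*k+1 = (2*k)+1 := rfl
    rw [e2, LpJ0 e (s*w) (p5 hJordan h2 hid s w hs hw) (2*k), add_zero]
  have WAval : ∀ t x u v w : J, inJ1 e u → inJh e v → inJ0 e w → x = u + v + w →
      t * Lp e k (Lp e (k+1) x) = t*u + t * Lp e (2*k+1) v := by
    intro t x u v w hu hv hw hx
    have h1 : Lp e (k+1) x = u + Lp e (k+1) v := by
      rw [hx, Lp_add, Lp_add, LpJ1 e u hu, LpJ0 e w hw k, add_zero]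
    rw [h1, Lp_add, LpJ1 e u hu, Lp_comp]
    have e1 : k+(k+1) = 2*k+1 := by omega
    rw [e1, mul_add]
  have W1val : ∀ s t x u v w : J, inJ0 e s → inJh e t → inJ1 e u → inJh e v → inJ0 e w →
      x = u + v + w →
      Lp e (k+1) (Lp e k (s * (t * Lp e k (Lp e (k+1) x)))) = s * Lp e (2*k+1) (t*u) := by
    intro s t x u v w hs ht hu hv hw hx
    rw [WAval t x u v w hu hv hw hx]
    obtain ⟨hz1, hz0, hzdec⟩ := p6dec hJordan h2 hid t (Lp e (2*k+1) v) ht (inJh_Lp _ _ hv)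
    exact WSval s _ (e*(t*Lp e (2*k+1) v)) (t*u) (t*Lp e (2*k+1) v - e*(t*Lp e (2*k+1) v))
      hs hz1 (p3 hJordan h2 hid u t hu ht) hz0 (by rw [hzdec]; abel)
  -- generic outer-WS helpers
  have WSgen : ∀ s' y : J, inJ0 e s' → inJh e y →
      Lp e (k+1) (Lp e k (s' * y)) = s' * Lp e (2*k+1) y :=
    fun s' y hs' hy => WSval s' y 0 y 0 hs' inJ1_zero hy inJ0_zero (by abel)
  have WSpull : ∀ (s' s : J) (m : ℕ) (y : J), inJ0 e s' → inJ0 e s → inJh e y →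
      Lp e (k+1) (Lp e k (s' * (s * Lp e m y))) = s' * (s * Lp e (2*k+1+m) y) := by
    intro s' s m y hs' hs hy
    rw [WSgen s' _ hs' (p4 hJordan h2 hid s _ hs (inJh_Lp _ _ hy))]
    rw [Lp_swap h2 hJordan hid _ s _ hs (inJh_Lp _ _ hy), Lp_comp]
  -- the J0-extraction composite
  have W0full : ∃ M : ℕ, ∀ t s s'' : J, inJh e t → inJ0 e s → inJ0 e s'' →
      ∃ F : J → J,
        (∀ γ α β : J, φ γ = φ α + φ β → φ (F γ) = φ (F α) + φ (F β)) ∧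
        (∀ x u v w : J, inJ1 e u → inJh e v → inJ0 e w → x = u + v + w →
          F x = s'' * Lp e (2*k+1+M) (t*(s*w))) := by
    obtain rfl | ⟨m, rfl⟩ : k = 0 ∨ ∃ m, k = m+1 := by
      rcases k with _|m
      exacts [Or.inl rfl, Or.inr ⟨m, rfl⟩]
    · -- k = 0
      refine ⟨0, fun t s s'' ht hs hs'' =>
        ⟨fun x => Lp e 1 (Lp e 0 (s'' * (t * Lp e 0 (Lp e 0 (s * x))))), ?_, ?_⟩⟩
      · intro γ α β h
        exact DM _ _ _ (DK s'' _ _ _ (DA t _ _ _ (DK s _ _ _ h)))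
      · intro x u v w hu hv hw hx
        show Lp e 1 (s'' * (t * (s * x))) = s'' * Lp e 1 (t*(s*w))
        have hsv : inJh e (s*v) := p4 hJordan h2 hid s v hs hv
        have hsw : inJ0 e (s*w) := p5 hJordan h2 hid s w hs hw
        have hTW : inJh e (t*(s*w)) := by
          have := p4 hJordan h2 hid (s*w) t hsw ht
          rwa [mul_comm] at this
        obtain ⟨hz1, hz0, hzdec⟩ := p6dec hJordan h2 hid t (s*v) ht hsv
        have h1 : s * x = s*v + s*w := by
          rw [hx, mul_add, mul_add, mul_comm s u, p2 hJordan h2 hid u s hu hs, zero_add]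
        have h2' : s'' * (t * (s * x)) =
            s''*(e*(t*(s*v))) + s''*(t*(s*v) - e*(t*(s*v))) + s''*(t*(s*w)) := by
          rw [h1, mul_add t, mul_add s'']
          congr 1
          rw [← mul_add s'', ← hzdec]
        rw [h2', Lp_one, mul_add, mul_add]
        rw [mul_comm s'' (e*(t*(s*v))), p2 hJordan h2 hid _ s'' hz1 hs'', mul_zero, zero_add]
        rw [show e * (s'' * (t * (s * v) - e * (t * (s * v)))) = 0 from
          p5 hJordan h2 hid s'' _ hs'' hz0]
        rw [zero_add, Lp_one, hl_swap h2 hJordan hid s'' _ hs'' hTW]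
    · -- k = m + 1
      refine ⟨m, fun t s s'' ht hs hs'' => ?_⟩
      have WT_H : ∀ x : J, rnm ((List.replicate m e ++ [t, s]) ++ [x]) = Lp e m (t*(s*x)) := by
        intro x
        rw [List.append_assoc, rnm_replicate _ _ _ (by simp)]
        rfl
      have DH : ∀ γ α β : J, φ γ = φ α + φ β →
          φ (Lp e m (t*(s*γ))) = φ (Lp e m (t*(s*α))) + φ (Lp e m (t*(s*β))) := by
        intro γ α β h
        have := Dstep (List.replicate m e ++ [t, s]) (by simp) γ α β h
        rwa [WT_H, WT_H, WT_H] at this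
      refine ⟨fun x => Lp e (m+1+1) (Lp e (m+1) (s'' * (Lp e m (t * (s * x))))), ?_, ?_⟩
      · intro γ α β h
        exact DM _ _ _ (DK s'' _ _ _ (DH _ _ _ h))
      · intro x u v w hu hv hw hx
        have hsv : inJh e (s*v) := p4 hJordan h2 hid s v hs hv
        have hsw : inJ0 e (s*w) := p5 hJordan h2 hid s w hs hw
        have hTW : inJh e (t*(s*w)) := by
          have := p4 hJordan h2 hid (s*w) t hsw ht
          rwa [mul_comm] at this
        obtain ⟨hz1, hz0, hzdec⟩ := p6dec hJordan h2 hid t (s*v) ht hsv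
        have h1 : s * x = s*v + s*w := by
          rw [hx, mul_add, mul_add, mul_comm s u, p2 hJordan h2 hid u s hu hs, zero_add]
        have h3 : Lp e m (t*(s*x)) = e*(t*(s*v)) + Lp e m (t*(s*w)) +
            Lp e m (t*(s*v) - e*(t*(s*v))) := by
          rw [h1, mul_add t, Lp_add]
          nth_rewrite 1 [hzdec]
          rw [Lp_add, LpJ1 e _ hz1 m]
          abel
        show Lp e (m+1+1) (Lp e (m+1) (s'' * Lp e m (t * (s * x)))) =
          s'' * Lp e (2*(m+1)+1+m) (t*(s*w))
        rw [WSval s'' _ (e*(t*(s*v))) (Lp e m (t*(s*w))) (Lp e m (t*(s*v) - e*(t*(s*v))))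
          hs'' hz1 (inJh_Lp _ _ hTW) (inJ0_Lp _ _ hz0) h3, Lp_comp]
  obtain ⟨M, hW0⟩ := W0full
  -- Claim 1 : additivity for (J1, Jh) pairs
  have C1 : ∀ a1 bh : J, inJ1 e a1 → inJh e bh → φ (a1 + bh) = φ a1 + φ bh := by
    intro a1 bh ha hb
    obtain ⟨c, hc⟩ := hsurj (φ a1 + φ bh)
    obtain ⟨cu, cv, cw, hcu, hcv, hcw, hcd⟩ := decomp hJordan h2 hid c
    have deca : a1 = a1 + 0 + 0 := by abel
    have decb : bh = 0 + bh + 0 := by abel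
    have pinv : cv = bh := by
      have key : ∀ s : J, inJ0 e s → s * Lp e (2*k+1) (cv - bh) = 0 := by
        intro s hs
        have r2 := DM _ _ _ (DK s _ _ _ hc)
        rw [WSval s c cu cv cw hs hcu hcv hcw hcd,
            WSval s a1 a1 0 0 hs ha inJh_zero inJ0_zero deca,
            WSval s bh 0 bh 0 hs inJ1_zero hb inJ0_zero decb] at r2
        rw [Lp_zero, mul_zero, phi0, zero_add] at r2
        have heq := hinj r2
        rw [Lp_sub, mul_sub, heq, sub_self]
      have hd : inJh e (cv - bh) := inJh_sub _ _ hcv hb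
      have h0 := hc3 _ (inJh_Lp (2*k+1) _ hd) key
      exact sub_eq_zero.mp (Jh_Lp_cancel (2*k+1) _ hd h0)
    have pinu : cu = a1 := by
      have key : ∀ t : J, inJh e t → t * (cu - a1) = 0 := by
        intro t ht
        have hd1 : inJh e (t*(cu - a1)) :=
          p3 hJordan h2 hid _ t (inJ1_sub _ _ hcu ha) ht
        have keys : ∀ s : J, inJ0 e s → s * Lp e (2*k+1) (t*(cu - a1)) = 0 := by
          intro s hs
          have r4 := DM _ _ _ (DK s _ _ _ (DA t _ _ _ (DM _ _ _ hc)))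
          rw [W1val s t c cu cv cw hs ht hcu hcv hcw hcd,
              W1val s t a1 a1 0 0 hs ht ha inJh_zero inJ0_zero deca,
              W1val s t bh 0 bh 0 hs ht inJ1_zero hb inJ0_zero decb] at r4
          rw [mul_zero t, Lp_zero, mul_zero, phi0, add_zero] at r4
          have heq := hinj r4
          rw [mul_sub t, Lp_sub, mul_sub, heq, sub_self]
        have h0 := hc3 _ (inJh_Lp (2*k+1) _ hd1) keys
        exact Jh_Lp_cancel (2*k+1) _ hd1 h0
      exact sub_eq_zero.mp (hc1 _ (inJ1_sub _ _ hcu ha) key)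
    have pinw : cw = 0 := by
      have key2 : ∀ t s : J, inJh e t → inJ0 e s → t * (s * cw) = 0 := by
        intro t s ht hs
        have hTW : inJh e (t*(s*cw)) := by
          have := p4 hJordan h2 hid (s*cw) t (p5 hJordan h2 hid s cw hs hcw) ht
          rwa [mul_comm] at this
        have key3 : ∀ s'' : J, inJ0 e s'' → s'' * Lp e (2*k+1+M) (t*(s*cw)) = 0 := by
          intro s'' hs''
          obtain ⟨F, hFcl, hFval⟩ := hW0 t s s'' ht hs hs''
          have r := hFcl _ _ _ hc
          rw [hFval c cu cv cw hcu hcv hcw hcd,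
              hFval a1 a1 0 0 ha inJh_zero inJ0_zero deca,
              hFval bh 0 bh 0 inJ1_zero hb inJ0_zero decb] at r
          rw [mul_zero s, mul_zero t, Lp_zero, mul_zero, phi0, add_zero] at r
          rw [← phi0] at r
          exact hinj r
        have h0 := hc3 _ (inJh_Lp (2*k+1+M) _ hTW) key3
        exact Jh_Lp_cancel (2*k+1+M) _ hTW h0
      have key1 : ∀ s : J, inJ0 e s → s * cw = 0 := fun s hs =>
        hc1' _ (p5 hJordan h2 hid s cw hs hcw) (fun t ht => key2 t s ht hs)
      exact hc2 _ hcw key1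
    have hcab : c = a1 + bh := by rw [hcd, pinu, pinv, pinw, add_zero]
    rw [← hcab]
    exact hc
  -- Claim 2 : additivity for (Jh, J0) pairs
  have C2 : ∀ th s0 : J, inJh e th → inJ0 e s0 → φ (th + s0) = φ th + φ s0 := by
    intro th s0 hth hs0
    obtain ⟨c, hc⟩ := hsurj (φ th + φ s0)
    obtain ⟨cu, cv, cw, hcu, hcv, hcw, hcd⟩ := decomp hJordan h2 hid c
    have deca : th = 0 + th + 0 := by abel
    have decb : s0 = 0 + 0 + s0 := by abel
    have pinv : cv = th := by
      have key : ∀ s : J, inJ0 e s → s * Lp e (2*k+1) (cv - th) = 0 := by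
        intro s hs
        have r2 := DM _ _ _ (DK s _ _ _ hc)
        rw [WSval s c cu cv cw hs hcu hcv hcw hcd,
            WSval s th 0 th 0 hs inJ1_zero hth inJ0_zero deca,
            WSval s s0 0 0 s0 hs inJ1_zero inJh_zero hs0 decb] at r2
        rw [Lp_zero, mul_zero, phi0, add_zero] at r2
        have heq := hinj r2
        rw [Lp_sub, mul_sub, heq, sub_self]
      have hd : inJh e (cv - th) := inJh_sub _ _ hcv hth
      have h0 := hc3 _ (inJh_Lp (2*k+1) _ hd) key
      exact sub_eq_zero.mp (Jh_Lp_cancel (2*k+1) _ hd h0)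
    have pinu : cu = 0 := by
      have key : ∀ t : J, inJh e t → t * cu = 0 := by
        intro t ht
        have hd1 : inJh e (t*cu) := p3 hJordan h2 hid _ t hcu ht
        have keys : ∀ s : J, inJ0 e s → s * Lp e (2*k+1) (t*cu) = 0 := by
          intro s hs
          have r4 := DM _ _ _ (DK s _ _ _ (DA t _ _ _ (DM _ _ _ hc)))
          rw [W1val s t c cu cv cw hs ht hcu hcv hcw hcd,
              W1val s t th 0 th 0 hs ht inJ1_zero hth inJ0_zero deca,
              W1val s t s0 0 0 s0 hs ht inJ1_zero inJh_zero hs0 decb] at r4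
          rw [mul_zero t, Lp_zero, mul_zero, phi0, add_zero] at r4
          rw [← phi0] at r4
          exact hinj r4
        have h0 := hc3 _ (inJh_Lp (2*k+1) _ hd1) keys
        exact Jh_Lp_cancel (2*k+1) _ hd1 h0
      exact hc1 _ hcu key
    have pinw : cw = s0 := by
      have key2 : ∀ t s : J, inJh e t → inJ0 e s → t * (s * (cw - s0)) = 0 := by
        intro t s ht hs
        have hTW : inJh e (t*(s*(cw - s0))) := by
          have := p4 hJordan h2 hid (s*(cw - s0)) t
            (p5 hJordan h2 hid s _ hs (inJ0_sub _ _ hcw hs0)) ht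
          rwa [mul_comm] at this
        have key3 : ∀ s'' : J, inJ0 e s'' → s'' * Lp e (2*k+1+M) (t*(s*(cw - s0))) = 0 := by
          intro s'' hs''
          obtain ⟨F, hFcl, hFval⟩ := hW0 t s s'' ht hs hs''
          have r := hFcl _ _ _ hc
          rw [hFval c cu cv cw hcu hcv hcw hcd,
              hFval th 0 th 0 inJ1_zero hth inJ0_zero deca,
              hFval s0 0 0 s0 inJ1_zero inJh_zero hs0 decb] at r
          rw [mul_zero s, mul_zero t, Lp_zero, mul_zero, phi0, zero_add] at r
          have heq := hinj r
          rw [mul_sub s, mul_sub t, Lp_sub, mul_sub, heq, sub_self]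
        have h0 := hc3 _ (inJh_Lp (2*k+1+M) _ hTW) key3
        exact Jh_Lp_cancel (2*k+1+M) _ hTW h0
      have key1 : ∀ s : J, inJ0 e s → s * (cw - s0) = 0 := fun s hs =>
        hc1' _ (p5 hJordan h2 hid s _ hs (inJ0_sub _ _ hcw hs0)) (fun t ht => key2 t s ht hs)
      exact sub_eq_zero.mp (hc2 _ (inJ0_sub _ _ hcw hs0) key1)
    have hcab : c = th + s0 := by rw [hcd, pinu, pinv, pinw, zero_add]
    rw [← hcab]
    exact hc

  -- Claim 3 (KEY) : φ(s'*(s*γ) + s'*δ) = φ(s'*(s*γ)) + φ(s'*δ)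
  have C3 : ∀ s' s γ δ : J, inJ0 e s' → inJ0 e s → inJh e γ → inJh e δ →
      φ (s' * (s * γ) + s' * δ) = φ (s' * (s * γ)) + φ (s' * δ) := by
    obtain rfl | ⟨m, rfl⟩ : k = 0 ∨ ∃ m, k = m+1 := by
      rcases k with _|m
      exacts [Or.inl rfl, Or.inr ⟨m, rfl⟩]
    · -- k = 0 (n = 2)
      intro s' s γ δ hs' hs hγ hδ
      set ξ := (4:ℕ) • δ with hξdef
      set η := (2:ℕ) • γ with hηdef
      have hξ : inJh e ξ := inJh_nsmul 4 δ hδ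
      have hη : inJh e η := inJh_nsmul 2 γ hγ
      have hrη : e * η = γ := by
        rw [hηdef, mul_nsmul_left, two_smul]; exact hγ
      have l1 : (2:ℕ) • (e*(e*δ)) = e*δ := by rw [two_smul]; exact inJh_L δ hδ
      have l2 : (2:ℕ) • (e*δ) = δ := by rw [two_smul]; exact hδ
      have hLLξ : e * (e * ξ) = δ := by
        rw [hξdef, mul_nsmul_left, mul_nsmul_left,
          show (4:ℕ) = 2*2 from rfl, mul_smul, l1, l2]
      have m2 : ∀ x y : J, φ (x * y) = φ x * φ y := by
        intro x y
        exact hmul [x, y] rfl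
      have hse : s * e = 0 := by rw [mul_comm]; exact hs
      have e1 : (ξ + s)*(e + η) = e*ξ + ξ*η + s*η := by
        rw [add_mul, mul_add, mul_add, mul_comm ξ e, hse, zero_add]
      have hT : φ (e*ξ + ξ*η + s*η) = φ (e*ξ) + φ (ξ*η) + φ (s*η) := by
        have h := m2 (ξ+s) (e+η)
        rw [C2 ξ s hξ hs, C1 e η hide hη, e1] at h
        rw [add_mul, mul_add, mul_add] at h
        rw [← m2 ξ e, ← m2 ξ η, ← m2 s e, ← m2 s η] at h
        rw [hse, phi0, zero_add, show ξ*e = e*ξ from mul_comm _ _] at h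
        exact h
      have r2 := DM3 _ _ _ _ (DK3 s' _ _ _ _ hT)
      simp only [show ∀ x : J, Lp e (0+1) (Lp e 0 x) = e * x from fun _ => rfl] at r2
      have hA : e * (s' * (e*ξ)) = s' * δ := by
        rw [hl_swap h2 hJordan hid s' _ hs' (inJh_L ξ hξ), hLLξ]
      obtain ⟨hz1, hz0, hzdec⟩ := p6dec hJordan h2 hid ξ η hξ hη
      have hB : e * (s' * (ξ*η)) = 0 := by
        rw [hzdec, mul_add s',
          show s' * (e*(ξ*η)) = 0 from by rw [mul_comm]; exact p2 hJordan h2 hid _ s' hz1 hs',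
          zero_add]
        exact p5 hJordan h2 hid s' _ hs' hz0
      have hsη : inJh e (s*η) := p4 hJordan h2 hid s η hs hη
      have hC : e * (s' * (s*η)) = s' * (s*γ) := by
        rw [hl_swap h2 hJordan hid s' _ hs' hsη, hl_swap h2 hJordan hid s η hs hη, hrη]
      have hX : e * (s' * (e*ξ + ξ*η + s*η)) = s' * (s*γ) + s' * δ := by
        rw [mul_add s', mul_add s', mul_add e, mul_add e, hA, hB, hC, add_zero]
        exact add_comm _ _
      rw [hA, hB, hC, hX, phi0, add_zero] at r2
      rw [r2]
      exact add_comm _ _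
    · -- k = m+1 (n ≥ 3)
      intro s' s γ δ hs' hs hγ hδ
      have hsγ : inJh e (s*γ) := p4 hJordan h2 hid s γ hs hγ
      set ξ := (2^(m+1+1+1):ℕ) • δ with hξdef
      set η := (2^(m+1+1+(m+1)):ℕ) • (s*γ) with hηdef
      have hξ : inJh e ξ := inJh_nsmul _ δ hδ
      have hη : inJh e η := inJh_nsmul _ (s*γ) hsγ
      have lv : ∀ x y : J, rnm (s' :: x :: (List.replicate m e ++ [y])) = s' * (x * Lp e m y) := by
        intro x y
        rw [rnm_cons_ne _ _ (by simp), rnm_cons_ne _ _ (by simp),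
          rnm_replicate _ _ _ (by simp), rnm_singleton]
      have hlen : ∀ x y : J, (s' :: x :: (List.replicate m e ++ [y])).length = m+1+2 := by
        intro x y
        simp
      have back : ∀ x y : J, rnm (φ s' :: φ x :: (List.replicate m (φ e) ++ [φ y]))
          = φ (s' * (x * Lp e m y)) := by
        intro x y
        have hm := hmul (s' :: x :: (List.replicate m e ++ [y])) (hlen x y)
        rw [lv] at hm
        simp only [List.map_cons, List.map_append, List.map_replicate, List.map_nil] at hm
        exact hm.symm
      have slot2 : ∀ (x y : J') (R : List J'), rnm (φ s' :: (x + y) :: R)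
          = rnm (φ s' :: x :: R) + rnm (φ s' :: y :: R) :=
        fun x y R => rnm_add_slot [φ s'] R x y
      have slot3 : ∀ (x y z : J'), rnm (φ s' :: x :: (List.replicate m (φ e) ++ [y + z]))
          = rnm (φ s' :: x :: (List.replicate m (φ e) ++ [y]))
            + rnm (φ s' :: x :: (List.replicate m (φ e) ++ [z])) :=
        fun x y z => rnm_add_slot (φ s' :: x :: List.replicate m (φ e)) [] y z
      have h0 := hmul (s' :: (e+ξ) :: (List.replicate m e ++ [e+η])) (hlen _ _)
      rw [lv] at h0
      simp only [List.map_cons, List.map_append, List.map_replicate, List.map_nil] at h0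
      rw [C1 e ξ hide hξ, C1 e η hide hη] at h0
      rw [slot2, slot3, slot3, back e e, back ξ e, back e η, back ξ η] at h0
      have vee : s' * (e * Lp e m e) = 0 := by
        rw [Lp_e e hid, hid, mul_comm]; exact hs'
      rw [vee, phi0, zero_add, ← add_assoc] at h0
      -- h0 : φ (s'*((e+ξ)*Lp m (e+η))) = φ (s'*(e*Lp m η)) + φ (s'*(ξ*Lp m e)) + φ (s'*(ξ*Lp m η))
      have r := DM3 _ _ _ _ h0
      have hLmη : inJh e (Lp e m η) := inJh_Lp m η hη
      have hA : Lp e (m+1+1) (s' * (e * Lp e m η)) = s' * (s*γ) := by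
        rw [show e * Lp e m η = Lp e (m+1) η from (Lp_succ' e m η).symm]
        rw [Lp_swap h2 hJordan hid _ s' _ hs' (inJh_Lp (m+1) η hη), Lp_comp, hηdef,
          Lp_pow2_smul _ _ hsγ]
      have hB : Lp e (m+1+1) (s' * (ξ * Lp e m e)) = s' * δ := by
        rw [Lp_e e hid, show ξ * e = Lp e 1 ξ from by rw [Lp_one, mul_comm]]
        rw [Lp_swap h2 hJordan hid _ s' _ hs' (inJh_Lp 1 ξ hξ), Lp_comp, hξdef,
          Lp_pow2_smul _ _ hδ]
      obtain ⟨hz1, hz0, hzdec⟩ := p6dec hJordan h2 hid ξ (Lp e m η) hξ hLmη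
      have hC : Lp e (m+1+1) (s' * (ξ * Lp e m η)) = 0 := by
        rw [hzdec, mul_add s',
          show s' * (e*(ξ*Lp e m η)) = 0 from by
            rw [mul_comm]; exact p2 hJordan h2 hid _ s' hz1 hs',
          zero_add]
        exact LpJ0 e _ (p5 hJordan h2 hid s' _ hs' hz0) (m+1)
      have hS : Lp e (m+1+1) (s' * ((e+ξ) * Lp e m (e+η))) = s' * (s*γ) + s' * δ := by
        have hin : s' * ((e+ξ) * Lp e m (e+η)) =
            s' * (e * Lp e m η) + s' * (ξ * Lp e m e) + s' * (ξ * Lp e m η) := by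
          rw [Lp_add, Lp_e e hid, add_mul, mul_add e, mul_add ξ, hid]
          rw [mul_add s', mul_add s', mul_add s',
            show s' * e = 0 from by rw [mul_comm]; exact hs', zero_add]
          rw [show ξ * e = ξ * Lp e m e from by rw [Lp_e e hid]]
          abel
        rw [hin, Lp_add, Lp_add, hA, hB, hC, add_zero]
      rw [hS, hA, hB, hC, phi0, add_zero] at r
      exact r

  -- FINAL: general additivity
  obtain ⟨au, av, aw, hau, hav, haw, hda⟩ := decomp hJordan h2 hid a
  obtain ⟨bu, bv, bw, hbu, hbv, hbw, hdb⟩ := decomp hJordan h2 hid b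
  obtain ⟨c, hc⟩ := hsurj (φ a + φ b)
  obtain ⟨cu, cv, cw, hcu, hcv, hcw, hdc⟩ := decomp hJordan h2 hid c
  have pinv : cv = av + bv := by
    have hd : inJh e (cv - (av + bv)) :=
      inJh_sub _ _ hcv (inJh_add hJordan h2 hid _ _ hav hbv)
    have key : ∀ s s' : J, inJ0 e s → inJ0 e s' →
        s' * (s * Lp e (2*k+1+(2*k+1)) (cv - (av+bv))) = 0 := by
      intro s s' hs hs'
      have r4 := DM _ _ _ (DK s' _ _ _ (DM _ _ _ (DK s _ _ _ hc)))
      rw [WSval s a au av aw hs hau hav haw hda,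
          WSval s b bu bv bw hs hbu hbv hbw hdb,
          WSval s c cu cv cw hs hcu hcv hcw hdc,
          WSpull s' s (2*k+1) av hs' hs hav,
          WSpull s' s (2*k+1) bv hs' hs hbv,
          WSpull s' s (2*k+1) cv hs' hs hcv] at r4
      have hadd := C3 s' s (Lp e (2*k+1+(2*k+1)) av) (s * Lp e (2*k+1+(2*k+1)) bv) hs' hs
        (inJh_Lp _ _ hav) (p4 hJordan h2 hid s _ hs (inJh_Lp _ _ hbv))
      rw [← hadd] at r4
      have heq := hinj r4
      rw [Lp_sub, Lp_add, mul_sub s, mul_add s, mul_sub s', mul_add s']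
      linear_combination (norm := abel) heq
    have st1 : ∀ s : J, inJ0 e s → s * Lp e (2*k+1+(2*k+1)) (cv - (av+bv)) = 0 :=
      fun s hs => hc3 _ (p4 hJordan h2 hid s _ hs (inJh_Lp _ _ hd))
        (fun s' hs' => key s s' hs hs')
    have st2 := hc3 _ (inJh_Lp _ _ hd) st1
    exact sub_eq_zero.mp (Jh_Lp_cancel _ _ hd st2)
  have pinu : cu = au + bu := by
    have hu' : inJ1 e (cu - (au + bu)) := by
      show e * _ = _
      rw [mul_sub, mul_add, hcu, hau, hbu]
    have key : ∀ t : J, inJh e t → t * (cu - (au+bu)) = 0 := by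
      intro t ht
      have hd1 : inJh e (t*(cu - (au+bu))) := p3 hJordan h2 hid _ t hu' ht
      have keys : ∀ s s' : J, inJ0 e s → inJ0 e s' →
          s' * (s * Lp e (2*k+1+(2*k+1)) (t*(cu - (au+bu)))) = 0 := by
        intro s s' hs hs'
        have r6 := DM _ _ _ (DK s' _ _ _ (DM _ _ _ (DK s _ _ _ (DA t _ _ _ (DM _ _ _ hc)))))
        rw [W1val s t a au av aw hs ht hau hav haw hda,
            W1val s t b bu bv bw hs ht hbu hbv hbw hdb,
            W1val s t c cu cv cw hs ht hcu hcv hcw hdc,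
            WSpull s' s (2*k+1) (t*au) hs' hs (p3 hJordan h2 hid au t hau ht),
            WSpull s' s (2*k+1) (t*bu) hs' hs (p3 hJordan h2 hid bu t hbu ht),
            WSpull s' s (2*k+1) (t*cu) hs' hs (p3 hJordan h2 hid cu t hcu ht)] at r6
        have hadd := C3 s' s (Lp e (2*k+1+(2*k+1)) (t*au)) (s * Lp e (2*k+1+(2*k+1)) (t*bu))
          hs' hs (inJh_Lp _ _ (p3 hJordan h2 hid au t hau ht))
          (p4 hJordan h2 hid s _ hs (inJh_Lp _ _ (p3 hJordan h2 hid bu t hbu ht)))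
        rw [← hadd] at r6
        have heq := hinj r6
        rw [mul_sub t, mul_add t, Lp_sub, Lp_add, mul_sub s, mul_add s, mul_sub s', mul_add s']
        linear_combination (norm := abel) heq
      have st1 : ∀ s : J, inJ0 e s → s * Lp e (2*k+1+(2*k+1)) (t*(cu - (au+bu))) = 0 :=
        fun s hs => hc3 _ (p4 hJordan h2 hid s _ hs (inJh_Lp _ _ hd1))
          (fun s' hs' => keys s s' hs hs')
      have st2 := hc3 _ (inJh_Lp _ _ hd1) st1
      exact Jh_Lp_cancel _ _ hd1 st2
    exact sub_eq_zero.mp (hc1 _ hu' key)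
  have pinw : cw = aw + bw := by
    have hw' : inJ0 e (cw - (aw + bw)) := by
      show e * _ = 0
      rw [mul_sub, mul_add, hcw, haw, hbw]
      abel
    have key2 : ∀ t s : J, inJh e t → inJ0 e s → t * (s * (cw - (aw+bw))) = 0 := by
      intro t s ht hs
      have hTWd : inJh e (t*(s*(cw - (aw+bw)))) := by
        have := p4 hJordan h2 hid (s*(cw - (aw+bw))) t
          (p5 hJordan h2 hid s _ hs hw') ht
        rwa [mul_comm] at this
      have hTWa : inJh e (t*(s*aw)) := by
        have := p4 hJordan h2 hid (s*aw) t (p5 hJordan h2 hid s _ hs haw) ht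
        rwa [mul_comm] at this
      have hTWb : inJh e (t*(s*bw)) := by
        have := p4 hJordan h2 hid (s*bw) t (p5 hJordan h2 hid s _ hs hbw) ht
        rwa [mul_comm] at this
      have keys : ∀ s'' s' : J, inJ0 e s'' → inJ0 e s' →
          s' * (s'' * Lp e (2*k+1+(2*k+1+M)) (t*(s*(cw - (aw+bw))))) = 0 := by
        intro s'' s' hs'' hs'
        obtain ⟨F, hFcl, hFval⟩ := hW0 t s s'' ht hs hs''
        have r := DM _ _ _ (DK s' _ _ _ (hFcl _ _ _ hc))
        rw [hFval a au av aw hau hav haw hda,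
            hFval b bu bv bw hbu hbv hbw hdb,
            hFval c cu cv cw hcu hcv hcw hdc,
            WSpull s' s'' (2*k+1+M) (t*(s*aw)) hs' hs'' hTWa,
            WSpull s' s'' (2*k+1+M) (t*(s*bw)) hs' hs'' hTWb,
            WSpull s' s'' (2*k+1+M) (t*(s*cw)) hs' hs'' (by
              have := p4 hJordan h2 hid (s*cw) t (p5 hJordan h2 hid s _ hs hcw) ht
              rwa [mul_comm] at this)] at r
        have hadd := C3 s' s'' (Lp e (2*k+1+(2*k+1+M)) (t*(s*aw)))
          (s'' * Lp e (2*k+1+(2*k+1+M)) (t*(s*bw))) hs' hs''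
          (inJh_Lp _ _ hTWa) (p4 hJordan h2 hid s'' _ hs'' (inJh_Lp _ _ hTWb))
        rw [← hadd] at r
        have heq := hinj r
        rw [mul_sub s, mul_add s, mul_sub t, mul_add t, Lp_sub, Lp_add,
          mul_sub s'', mul_add s'', mul_sub s', mul_add s']
        linear_combination (norm := abel) heq
      have st1 : ∀ s'' : J, inJ0 e s'' →
          s'' * Lp e (2*k+1+(2*k+1+M)) (t*(s*(cw - (aw+bw)))) = 0 :=
        fun s'' hs'' => hc3 _ (p4 hJordan h2 hid s'' _ hs'' (inJh_Lp _ _ hTWd))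
          (fun s' hs' => keys s'' s' hs'' hs')
      have st2 := hc3 _ (inJh_Lp _ _ hTWd) st1
      exact Jh_Lp_cancel _ _ hTWd st2
    have key1 : ∀ s : J, inJ0 e s → s * (cw - (aw+bw)) = 0 := fun s hs =>
      hc1' _ (p5 hJordan h2 hid s _ hs hw') (fun t ht => key2 t s ht hs)
    exact sub_eq_zero.mp (hc2 _ hw' key1)
  have hcab : c = a + b := by
    rw [hdc, pinu, pinv, pinw, hda, hdb]
    abel
  rw [← hcab]
  exact hc
end

section
/- Let J be a Jordan ring with idempotent e and d : J → J an n-multiplicative derivation (n ≥ 2). Assume J is (n−1)-torsion free and 2-torsion free. Writing d(e) = a₁ + a_{1/2} + a₀ with respect to the Peirce decomposition relative to e, one has a₁ = a₀ = 0; that is, d(e) ∈ J_{1/2}. -/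
/-- `d` is an `n`-multiplicative derivation (w.r.t. the right-normed monomial of degree `n`):
`d(m(x₁,…,xₙ)) = Σᵢ m(x₁,…,d(xᵢ),…,xₙ)`. -/
def IsNDer {J : Type*} [NonUnitalNonAssocRing J] (n : ℕ) (d : J → J) : Prop :=
  ∀ l : List J, l.length = n →
    d (rnm l) = ∑ i ∈ Finset.range n, rnm (l.set i (d (l.getD i 0)))

section Aux

variable {J : Type*} [NonUnitalNonAssocCommRing J]

/-- Iterated left multiplication by `e`. -/
def iterL (e : J) : ℕ → J → J
  | 0, x => x
  | k + 1, x => e * iterL e k x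

lemma iterL_succ (e : J) (k : ℕ) (x : J) : iterL e (k + 1) x = e * iterL e k x := rfl

lemma iterL_add (e : J) : ∀ (k : ℕ) (x y : J), iterL e k (x + y) = iterL e k x + iterL e k y
  | 0, _, _ => rfl
  | k + 1, x, y => by rw [iterL_succ, iterL_add e k, mul_add, iterL_succ, iterL_succ]

lemma iterL_fix (e a : J) (h : e * a = a) : ∀ k, iterL e k a = a
  | 0 => rfl
  | k + 1 => by rw [iterL_succ, iterL_fix e a h k, h]

lemma iterL_kill (e a : J) (h : e * a = 0) : ∀ k, iterL e (k + 1) a = 0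
  | 0 => h
  | k + 1 => by rw [iterL_succ, iterL_kill e a h k, mul_zero]

lemma iterL_half (e a : J) (h : e * a + e * a = a) :
    ∀ k, iterL e (k + 1) a + iterL e (k + 1) a = iterL e k a
  | 0 => h
  | k + 1 => by
    rw [iterL_succ e (k + 1), ← mul_add, iterL_half e a h k, iterL_succ]

lemma rnm_cons (a : J) (l : List J) (hl : l ≠ []) : rnm (a :: l) = a * rnm l := by
  cases l with
  | nil => exact absurd rfl hl
  | cons b t => rfl

lemma rnm_replicate (e : J) (hid : e * e = e) : ∀ k, rnm (List.replicate (k + 1) e) = e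
  | 0 => rfl
  | k + 1 => by
    rw [List.replicate_succ, rnm_cons _ _ (by simp), rnm_replicate e hid k, hid]

lemma rnm_replicate' (e : J) (hid : e * e = e) {k : ℕ} (hk : k ≠ 0) :
    rnm (List.replicate k e) = e := by
  obtain ⟨j, rfl⟩ := Nat.exists_eq_succ_of_ne_zero hk
  exact rnm_replicate e hid j

lemma rnm_set_last (e x : J) : ∀ k, rnm ((List.replicate (k + 1) e).set k x) = iterL e k x
  | 0 => rfl
  | k + 1 => by
    rw [List.replicate_succ]
    show rnm (e :: (List.replicate (k + 1) e).set k x) = _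
    rw [rnm_cons _ _ (by simp [← List.length_pos_iff_ne_nil]), rnm_set_last e x k, iterL_succ]

lemma rnm_set_mid (e x : J) (hid : e * e = e) :
    ∀ k m, rnm ((List.replicate (k + m + 2) e).set k x) = iterL e (k + 1) x
  | 0, m => by
    rw [Nat.zero_add]
    show rnm ((List.replicate (m + 2) e).set 0 x) = e * x
    rw [List.replicate_succ]
    show rnm (x :: List.replicate (m + 1) e) = e * x
    rw [rnm_cons _ _ (by simp), rnm_replicate e hid m, mul_comm]
  | k + 1, m => by
    rw [show k + 1 + m + 2 = (k + m + 2) + 1 by omega, List.replicate_succ]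
    show rnm (e :: (List.replicate (k + m + 2) e).set k x) = _
    rw [rnm_cons _ _ (by simp [← List.length_pos_iff_ne_nil]), rnm_set_mid e x hid k m]
    rfl

lemma rnm_set (e x : J) (hid : e * e = e) {n i : ℕ} (hi : i < n) :
    rnm ((List.replicate n e).set i x) = iterL e (min (i + 1) (n - 1)) x := by
  rcases eq_or_lt_of_le (Nat.succ_le_of_lt hi) with h | h
  · -- i + 1 = n
    have hmin : min (i + 1) (n - 1) = i := by omega
    rw [hmin, ← h]
    exact rnm_set_last e x i
  · -- i + 1 < n
    have hmin : min (i + 1) (n - 1) = i + 1 := by omega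
    rw [hmin, show n = i + (n - i - 2) + 2 by omega]
    exact rnm_set_mid e x hid i (n - i - 2)

lemma getD_replicate' {J : Type*} (e z : J) : ∀ (n i : ℕ), i < n →
    List.getD (List.replicate n e) i z = e
  | n + 1, 0, _ => rfl
  | n + 1, i + 1, h => by
    rw [List.replicate_succ]
    show List.getD (List.replicate n e) i z = e
    exact getD_replicate' e z n i (by omega)

end Aux

theorem nDer_idempotent_image {n : ℕ} (hn : 2 ≤ n) {J : Type*} [NonUnitalNonAssocCommRing J]
    (hJordan : ∀ x y : J, ((x * x) * y) * x = (x * x) * (y * x))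
    (h2 : ∀ x : J, x + x = 0 → x = 0)
    (hn1 : ∀ x : J, (n - 1) • x = 0 → x = 0)
    (e : J) (hid : e * e = e) (hne : e ≠ 0) (hnu : ∃ x : J, e * x ≠ x)
    (d : J → J) (hder : IsNDer n d) :
    ∀ a₁ ∈ peirce1 e, ∀ a₂ ∈ peirceHalf e, ∀ a₀ ∈ peirce0 e,
      d e = a₁ + a₂ + a₀ → a₁ = 0 ∧ a₀ = 0 := by
  intro a₁ h1 a₂ hh a₀ h0 hde
  simp only [peirce1, peirceHalf, peirce0, Set.mem_setOf_eq] at h1 hh h0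
  have hm1 : ∀ i : ℕ, 1 ≤ min (i + 1) (n - 1) := fun i => le_min (by omega) (by omega)
  -- value of iterL on d e
  have hD : ∀ k, iterL e (k + 1) (d e) = a₁ + iterL e (k + 1) a₂ := by
    intro k
    rw [hde, iterL_add, iterL_add, iterL_fix e a₁ h1 (k + 1), iterL_kill e a₀ h0 k, add_zero]
  -- main equation from the derivation property
  have E1 : d e = ∑ i ∈ Finset.range n, (a₁ + iterL e (min (i + 1) (n - 1)) a₂) := by
    calc d e = d (rnm (List.replicate n e)) := by
          rw [rnm_replicate' e hid (by omega)]
      _ = ∑ i ∈ Finset.range n,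
            rnm ((List.replicate n e).set i (d ((List.replicate n e).getD i 0))) :=
          hder _ (by simp)
      _ = ∑ i ∈ Finset.range n, (a₁ + iterL e (min (i + 1) (n - 1)) a₂) := by
          refine Finset.sum_congr rfl fun i hi => ?_
          have hi' : i < n := Finset.mem_range.mp hi
          rw [getD_replicate' e 0 n i hi', rnm_set e (d e) hid hi']
          obtain ⟨k, hk⟩ : ∃ k, min (i + 1) (n - 1) = k + 1 :=
            ⟨min (i + 1) (n - 1) - 1, by have := hm1 i; omega⟩
          rw [hk, hD k]
  -- apply L_e to the main equation
  have hde' : e * d e = a₁ + iterL e 1 a₂ := by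
    rw [hde, mul_add, mul_add, h1, h0, add_zero]; rfl
  have E2 : a₁ + iterL e 1 a₂ = ∑ i ∈ Finset.range n, (a₁ + iterL e (min (i + 1) (n - 1) + 1) a₂) := by
    rw [← hde']
    calc e * d e = e * ∑ i ∈ Finset.range n, (a₁ + iterL e (min (i + 1) (n - 1)) a₂) := by rw [← E1]
      _ = ∑ i ∈ Finset.range n, e * (a₁ + iterL e (min (i + 1) (n - 1)) a₂) := Finset.mul_sum _ _ _
      _ = ∑ i ∈ Finset.range n, (a₁ + iterL e (min (i + 1) (n - 1) + 1) a₂) := by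
          refine Finset.sum_congr rfl fun i _ => ?_
          rw [mul_add, h1, iterL_succ]
  -- combine: 2·E2 − E1
  have E3 : (a₁ + iterL e 1 a₂) + (a₁ + iterL e 1 a₂) - d e = n • a₁ := by
    rw [E1, E2, ← Finset.sum_add_distrib, ← Finset.sum_sub_distrib]
    rw [show (n : ℕ) • a₁ = ∑ _i ∈ Finset.range n, a₁ by
      rw [Finset.sum_const, Finset.card_range]]
    refine Finset.sum_congr rfl fun i _ => ?_
    rw [← iterL_half e a₂ hh (min (i + 1) (n - 1))]
    abel
  have hh1 : iterL e 1 a₂ + iterL e 1 a₂ = a₂ := iterL_half e a₂ hh 0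
  have E4 : a₁ - a₀ = n • a₁ := by
    rw [← E3, hde]
    have h5 : a₁ + iterL e 1 a₂ + (a₁ + iterL e 1 a₂) - (a₁ + a₂ + a₀)
        = a₁ - a₀ + (iterL e 1 a₂ + iterL e 1 a₂ - a₂) := by abel
    rw [h5, hh1, sub_self, add_zero]
  have E5 : a₀ + (n - 1) • a₁ = 0 := by
    have hns : n • a₁ = a₁ + (n - 1) • a₁ := by
      conv_lhs => rw [show n = 1 + (n - 1) by omega]
      rw [add_nsmul, one_nsmul]
    rw [hns, sub_eq_add_neg, add_right_inj] at E4
    rw [← E4]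
    simp
  have E6 : (n - 1) • a₁ = 0 := by
    have hφ : (AddMonoidHom.mulLeft e) (a₀ + (n - 1) • a₁) = 0 := by
      rw [E5, map_zero]
    rw [map_add, map_nsmul,
      show (AddMonoidHom.mulLeft e) a₀ = e * a₀ from rfl,
      show (AddMonoidHom.mulLeft e) a₁ = e * a₁ from rfl, h0, h1, zero_add] at hφ
    exact hφ
  have ha1 : a₁ = 0 := hn1 a₁ E6
  refine ⟨ha1, ?_⟩
  have := E5
  rw [ha1, smul_zero, add_zero] at this
  exact this
end

section
/- Let J be a 2-torsion free and (n−1)-torsion free Jordan ring with nontrivial idempotent e satisfying conditions (i)–(iii), and D : J → J an n-multiplicative derivation with D(e) = 0. Then for all a₁ ∈ J₁, a_{1/2} ∈ J_{1/2}, a₀ ∈ J₀: D(a₁ + a_{1/2} + a₀) = D(a₁) + D(a_{1/2}) + D(a₀). -/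
namespace NDerAux
variable {J : Type*} [NonUnitalNonAssocCommRing J]

/-- right-nested product of a list applied to a final element -/
def chain : List J → J → J
  | [], x => x
  | u :: us, x => u * chain us x

@[simp] lemma chain_nil (x : J) : chain [] x = x := rfl
@[simp] lemma chain_cons (u : J) (us : List J) (x : J) : chain (u :: us) x = u * chain us x := rfl

lemma rnm_cons (a : J) (l : List J) (h : l ≠ []) : rnm (a :: l) = a * rnm l := by
  cases l with
  | nil => exact absurd rfl h
  | cons b l' => rfl

lemma rnm_eq_chain : ∀ (us : List J) (x : J), rnm (us ++ [x]) = chain us x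
  | [], x => rfl
  | u :: us, x => by
    rw [List.cons_append, rnm_cons _ _ (by simp), rnm_eq_chain us x, chain_cons]

lemma chain_append_singleton (vs : List J) (u x : J) :
    chain (vs ++ [u]) x = chain vs (u * x) := by
  induction vs with
  | nil => rfl
  | cons v vs ih => simp [ih]

@[simp] lemma chain_zero_right (us : List J) : chain us (0 : J) = 0 := by
  induction us with
  | nil => rfl
  | cons u us ih => simp [ih]

lemma chain_sub (us : List J) (x y : J) : chain us (x - y) = chain us x - chain us y := by
  induction us with
  | nil => rfl
  | cons u us ih => simp [ih, mul_sub]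

lemma chain_of_zero_mem (us : List J) (x : J) (h : (0 : J) ∈ us) : chain us x = 0 := by
  induction us with
  | nil => simp at h
  | cons u us ih =>
    rcases List.mem_cons.mp h with h' | h'
    · simp [← h']
    · simp [ih h']

/-- iterated left multiplication by e -/
def Lp (e : J) : ℕ → J → J
  | 0, x => x
  | k + 1, x => e * Lp e k x

@[simp] lemma Lp_zero' (e : J) (x : J) : Lp e 0 x = x := rfl
@[simp] lemma Lp_succ (e : J) (k : ℕ) (x : J) : Lp e (k + 1) x = e * Lp e k x := rfl

lemma chain_replicate (e : J) (k : ℕ) (x : J) :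
    chain (List.replicate k e) x = Lp e k x := by
  induction k with
  | zero => rfl
  | succ k ih => simp [List.replicate_succ, ih]

lemma Lp_sub (e : J) (k : ℕ) (x y : J) : Lp e k (x - y) = Lp e k x - Lp e k y := by
  induction k with
  | zero => rfl
  | succ k ih => simp [ih, mul_sub]

lemma Lp_add' (e : J) (k : ℕ) (x y : J) : Lp e k (x + y) = Lp e k x + Lp e k y := by
  induction k with
  | zero => rfl
  | succ k ih => simp [ih, mul_add]

lemma Lp_e (e : J) (hid : e * e = e) (k : ℕ) : Lp e k e = e := by
  induction k with
  | zero => rfl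
  | succ k ih => rw [Lp_succ, ih, hid]

lemma zero_mem_set : ∀ (us : List J) (j : ℕ), j < us.length → (0 : J) ∈ us.set j 0
  | u :: us, 0, _ => by simp
  | u :: us, j + 1, h => by
    simp only [List.set_cons_succ, List.mem_cons]
    exact Or.inr (zero_mem_set us j (by simpa using Nat.lt_of_succ_lt_succ h))

lemma getD_replicate' (e : J) : ∀ (k j : ℕ), j < k → (List.replicate k e).getD j 0 = e
  | k + 1, 0, _ => rfl
  | k + 1, j + 1, h => by
    rw [List.replicate_succ]
    exact getD_replicate' e k j (by omega)

lemma master {n : ℕ} (hn : 2 ≤ n) (D : J → J) (hder : IsNDer n D)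
    (us : List J) (hus : us.length = n - 1) (x : J) :
    D (chain us x) =
      (∑ i ∈ Finset.range (n - 1), chain (us.set i (D (us.getD i 0))) x) + chain us (D x) := by
  have hlen : (us ++ [x]).length = n := by simp [hus]; omega
  have h := hder (us ++ [x]) hlen
  rw [rnm_eq_chain] at h
  rw [h]
  have hn1 : n - 1 + 1 = n := by omega
  rw [← hn1, Finset.sum_range_succ]
  congr 1
  · apply Finset.sum_congr rfl
    intro i hi
    have hi' : i < n - 1 := Finset.mem_range.mp hi
    have hil : i < us.length := by omega
    rw [List.getD_append _ _ _ _ hil, List.set_append_left _ _ hil, rnm_eq_chain]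
  · have h1 : (us ++ [x]).getD (n - 1) 0 = x := by
      rw [List.getD_append_right _ _ _ _ (by omega : us.length ≤ n - 1)]
      simp [hus]
    have h2 : (us ++ [x]).set (n - 1) (D x) = us ++ [D x] := by
      rw [List.set_append_right _ _ (by omega : us.length ≤ n - 1)]
      simp [hus]
    rw [h1, h2, rnm_eq_chain]

lemma Kcore {n : ℕ} (hn : 2 ≤ n) (D : J → J) (hder : IsNDer n D)
    (vs : List J) (hvs : vs.length = n - 2) (t z y : J)
    (h1 : t * z = 0) (h2 : D t * z = 0) :
    chain vs (t * (D (z + y) - D y)) = 0 := by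
  have hlen : (vs ++ [t]).length = n - 1 := by simp [hvs]; omega
  have hx := master hn D hder (vs ++ [t]) hlen (z + y)
  have hy := master hn D hder (vs ++ [t]) hlen y
  have harg : t * (z + y) = t * y := by rw [mul_add, h1, zero_add]
  have hchain : chain (vs ++ [t]) (z + y) = chain (vs ++ [t]) y := by
    rw [chain_append_singleton, chain_append_singleton, harg]
  have hsum : ∀ i ∈ Finset.range (n - 1),
      chain ((vs ++ [t]).set i (D ((vs ++ [t]).getD i 0))) (z + y) =
      chain ((vs ++ [t]).set i (D ((vs ++ [t]).getD i 0))) y := by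
    intro i hi
    rcases lt_or_ge i vs.length with hlt | hge
    · rw [List.set_append_left _ _ hlt, chain_append_singleton, chain_append_singleton, harg]
    · have hi' : i < n - 1 := Finset.mem_range.mp hi
      have hieq : i = vs.length := by omega
      have hg : (vs ++ [t]).getD i 0 = t := by
        rw [List.getD_append_right _ _ _ _ hge, hieq]; simp
      have hs : (vs ++ [t]).set i (D t) = vs ++ [D t] := by
        rw [List.set_append_right _ _ hge, hieq]; simp
      rw [hg, hs, chain_append_singleton, chain_append_singleton, mul_add, h2, zero_add]
  rw [hchain] at hx
  rw [hx, Finset.sum_congr rfl hsum] at hy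
  have h3 := add_left_cancel hy.symm
  rw [chain_append_singleton, chain_append_singleton] at h3
  rw [mul_sub, chain_sub, h3, sub_self]

lemma descent (e : J)
    (hOP : ∀ x : J, e * (e * (e * x)) + e * (e * (e * x)) + e * x
      = e * (e * x) + e * (e * x) + e * (e * x)) :
    ∀ (k : ℕ) (x : J), Lp e k x = 0 → e * x = 0 := by
  intro k
  induction k with
  | zero => intro x hx; rw [Lp_zero'] at hx; rw [hx, mul_zero]
  | succ k ih =>
    intro x hx
    cases k with
    | zero => simpa using hx
    | succ j =>
      apply ih
      have h2 : e * (e * Lp e j x) = 0 := by simpa using hx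
      have h3 : e * (e * (e * Lp e j x)) = 0 := by rw [h2, mul_zero]
      have h4 := hOP (Lp e j x)
      rw [h3, h2, zero_add, zero_add] at h4
      simpa using h4

lemma iterKill (e : J) (hP4 : ∀ a b : J, e * a = 0 → e * b = 0 → e * (a * b) = 0)
    (hc2 : ∀ a : J, e * a = 0 → (∀ t : J, e * t = 0 → t * a = 0) → a = 0) :
    ∀ (k : ℕ) (v : J), e * v = 0 →
      (∀ ss : List J, ss.length = k → (∀ s ∈ ss, e * s = 0) → chain ss v = 0) → v = 0 := by
  intro k
  induction k with
  | zero =>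
    intro v hv h
    simpa using h [] rfl (by simp)
  | succ k ih =>
    intro v hv h
    apply hc2 v hv
    intro t ht
    apply ih (t * v) (hP4 t v ht hv)
    intro ss hss hmem
    have hh := h (ss ++ [t]) (by simp [hss]) (by
      intro s hs
      rcases List.mem_append.mp hs with h' | h'
      · exact hmem s h'
      · simp only [List.mem_singleton] at h'; rw [h']; exact ht)
    rwa [chain_append_singleton] at hh

lemma half_eq (h2 : ∀ x : J, x + x = 0 → x = 0) {x y : J} (h : x + x = y + y) : x = y := by
  have h0 : (x - y) + (x - y) = 0 := by
    have h1 : (x - y) + (x - y) = (x + x) - (y + y) := by abel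
    rw [h1, h, sub_self]
  exact sub_eq_zero.mp (h2 _ h0)

lemma linA (e : J) (hid : e * e = e)
    (hJordan : ∀ x y : J, ((x * x) * y) * x = (x * x) * (y * x))
    (h2 : ∀ x : J, x + x = 0 → x = 0) (x y : J) :
    (e*y)*x + (((e*x)*y)*e + ((x*e)*y)*e) = e*(y*x) + ((e*x)*(y*e) + (x*e)*(y*e)) := by
  have hp : (e*y)*e + ((e*x)*y)*e + ((x*e)*y)*e + ((x*x)*y)*e
      + (e*y)*x + ((e*x)*y)*x + ((x*e)*y)*x + ((x*x)*y)*x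
      = e*(y*e) + (e*x)*(y*e) + (x*e)*(y*e) + (x*x)*(y*e)
      + e*(y*x) + (e*x)*(y*x) + (x*e)*(y*x) + (x*x)*(y*x) := by
    calc (e*y)*e + ((e*x)*y)*e + ((x*e)*y)*e + ((x*x)*y)*e
        + (e*y)*x + ((e*x)*y)*x + ((x*e)*y)*x + ((x*x)*y)*x
        = (((e+x)*(e+x))*y)*(e+x) := by
          simp only [mul_add, add_mul, hid]; abel
      _ = ((e+x)*(e+x))*(y*(e+x)) := hJordan (e+x) y
      _ = _ := by simp only [mul_add, add_mul, hid]; abel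
  have hm : (e*y)*e - ((e*x)*y)*e - ((x*e)*y)*e + ((x*x)*y)*e
      - (e*y)*x + ((e*x)*y)*x + ((x*e)*y)*x - ((x*x)*y)*x
      = e*(y*e) - (e*x)*(y*e) - (x*e)*(y*e) + (x*x)*(y*e)
      - e*(y*x) + (e*x)*(y*x) + (x*e)*(y*x) - (x*x)*(y*x) := by
    calc (e*y)*e - ((e*x)*y)*e - ((x*e)*y)*e + ((x*x)*y)*e
        - (e*y)*x + ((e*x)*y)*x + ((x*e)*y)*x - ((x*x)*y)*x
        = (((e-x)*(e-x))*y)*(e-x) := by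
          simp only [mul_add, add_mul, mul_sub, sub_mul, hid]; abel
      _ = ((e-x)*(e-x))*(y*(e-x)) := hJordan (e-x) y
      _ = _ := by simp only [mul_add, add_mul, mul_sub, sub_mul, hid]; abel
  apply half_eq h2
  have hj : ((x*x)*y)*x - (x*x)*(y*x) = 0 := sub_eq_zero.mpr (hJordan x y)
  rw [← sub_eq_zero]
  rw [← sub_eq_zero] at hp hm
  calc ((e*y)*x + (((e*x)*y)*e + ((x*e)*y)*e) + ((e*y)*x + (((e*x)*y)*e + ((x*e)*y)*e)))
      - (e*(y*x) + ((e*x)*(y*e) + (x*e)*(y*e)) + (e*(y*x) + ((e*x)*(y*e) + (x*e)*(y*e))))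
      = ((e*y)*e + ((e*x)*y)*e + ((x*e)*y)*e + ((x*x)*y)*e
        + (e*y)*x + ((e*x)*y)*x + ((x*e)*y)*x + ((x*x)*y)*x
        - (e*(y*e) + (e*x)*(y*e) + (x*e)*(y*e) + (x*x)*(y*e)
        + e*(y*x) + (e*x)*(y*x) + (x*e)*(y*x) + (x*x)*(y*x)))
      - ((e*y)*e - ((e*x)*y)*e - ((x*e)*y)*e + ((x*x)*y)*e
        - (e*y)*x + ((e*x)*y)*x + ((x*e)*y)*x - ((x*x)*y)*x
        - (e*(y*e) - (e*x)*(y*e) - (x*e)*(y*e) + (x*x)*(y*e)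
        - e*(y*x) + (e*x)*(y*x) + (x*e)*(y*x) - (x*x)*(y*x)))
      - ((((x*x)*y)*x - (x*x)*(y*x)) + (((x*x)*y)*x - (x*x)*(y*x))) := by abel
    _ = 0 := by rw [hp, hm, hj]; abel

lemma linB (e : J) (hid : e * e = e)
    (hJordan : ∀ x y : J, ((x * x) * y) * x = (x * x) * (y * x))
    (h2 : ∀ x : J, x + x = 0 → x = 0) (x y : J) :
    ((x*x)*y)*e + (((e*x)*y)*x + ((x*e)*y)*x) = (x*x)*(y*e) + ((e*x)*(y*x) + (x*e)*(y*x)) := by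
  have hp : (e*y)*e + ((e*x)*y)*e + ((x*e)*y)*e + ((x*x)*y)*e
      + (e*y)*x + ((e*x)*y)*x + ((x*e)*y)*x + ((x*x)*y)*x
      = e*(y*e) + (e*x)*(y*e) + (x*e)*(y*e) + (x*x)*(y*e)
      + e*(y*x) + (e*x)*(y*x) + (x*e)*(y*x) + (x*x)*(y*x) := by
    calc (e*y)*e + ((e*x)*y)*e + ((x*e)*y)*e + ((x*x)*y)*e
        + (e*y)*x + ((e*x)*y)*x + ((x*e)*y)*x + ((x*x)*y)*x
        = (((e+x)*(e+x))*y)*(e+x) := by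
          simp only [mul_add, add_mul, hid]; abel
      _ = ((e+x)*(e+x))*(y*(e+x)) := hJordan (e+x) y
      _ = _ := by simp only [mul_add, add_mul, hid]; abel
  have hm : (e*y)*e - ((e*x)*y)*e - ((x*e)*y)*e + ((x*x)*y)*e
      - (e*y)*x + ((e*x)*y)*x + ((x*e)*y)*x - ((x*x)*y)*x
      = e*(y*e) - (e*x)*(y*e) - (x*e)*(y*e) + (x*x)*(y*e)
      - e*(y*x) + (e*x)*(y*x) + (x*e)*(y*x) - (x*x)*(y*x) := by
    calc (e*y)*e - ((e*x)*y)*e - ((x*e)*y)*e + ((x*x)*y)*e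
        - (e*y)*x + ((e*x)*y)*x + ((x*e)*y)*x - ((x*x)*y)*x
        = (((e-x)*(e-x))*y)*(e-x) := by
          simp only [mul_add, add_mul, mul_sub, sub_mul, hid]; abel
      _ = ((e-x)*(e-x))*(y*(e-x)) := hJordan (e-x) y
      _ = _ := by simp only [mul_add, add_mul, mul_sub, sub_mul, hid]; abel
  apply half_eq h2
  have hd0 : (e*y)*e - e*(y*e) = 0 := by
    rw [mul_comm (e*y) e, mul_comm y e, sub_self]
  rw [← sub_eq_zero]
  rw [← sub_eq_zero] at hp hm
  calc (((x*x)*y)*e + (((e*x)*y)*x + ((x*e)*y)*x) + (((x*x)*y)*e + (((e*x)*y)*x + ((x*e)*y)*x)))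
      - ((x*x)*(y*e) + ((e*x)*(y*x) + (x*e)*(y*x)) + ((x*x)*(y*e) + ((e*x)*(y*x) + (x*e)*(y*x))))
      = ((e*y)*e + ((e*x)*y)*e + ((x*e)*y)*e + ((x*x)*y)*e
        + (e*y)*x + ((e*x)*y)*x + ((x*e)*y)*x + ((x*x)*y)*x
        - (e*(y*e) + (e*x)*(y*e) + (x*e)*(y*e) + (x*x)*(y*e)
        + e*(y*x) + (e*x)*(y*x) + (x*e)*(y*x) + (x*x)*(y*x)))
      + ((e*y)*e - ((e*x)*y)*e - ((x*e)*y)*e + ((x*x)*y)*e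
        - (e*y)*x + ((e*x)*y)*x + ((x*e)*y)*x - ((x*x)*y)*x
        - (e*(y*e) - (e*x)*(y*e) - (x*e)*(y*e) + (x*x)*(y*e)
        - e*(y*x) + (e*x)*(y*x) + (x*e)*(y*x) - (x*x)*(y*x)))
      - (((e*y)*e - e*(y*e)) + ((e*y)*e - e*(y*e))) := by abel
    _ = 0 := by rw [hp, hm, hd0]; abel

lemma lemJ1 (e : J) (hid : e * e = e)
    (hJordan : ∀ x y : J, ((x * x) * y) * x = (x * x) * (y * x))
    (h2 : ∀ x : J, x + x = 0 → x = 0) (a y : J) (ha : e * a = a) :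
    e * (a * y) = a * (e * y) := by
  have h := linA e hid hJordan h2 a y
  have hae : a * e = a := by rw [mul_comm]; exact ha
  rw [ha, hae] at h
  rw [mul_comm (e*y) a, mul_comm (a*y) e, mul_comm y a, mul_comm y e] at h
  have h0 : e*(a*y) - a*(e*y)
      = (a*(e*y) + (e*(a*y) + e*(a*y))) - (e*(a*y) + (a*(e*y) + a*(e*y))) := by abel
  rw [h, sub_self] at h0
  exact sub_eq_zero.mp h0

lemma lemJ0 (e : J) (hid : e * e = e)
    (hJordan : ∀ x y : J, ((x * x) * y) * x = (x * x) * (y * x))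
    (h2 : ∀ x : J, x + x = 0 → x = 0) (a y : J) (ha : e * a = 0) :
    e * (y * a) = (e * y) * a := by
  have h := linA e hid hJordan h2 a y
  have hae : a * e = 0 := by rw [mul_comm]; exact ha
  rw [ha, hae] at h
  simp only [zero_mul, add_zero, mul_zero] at h
  exact h.symm

lemma opIdent (e : J) (hid : e * e = e)
    (hJordan : ∀ x y : J, ((x * x) * y) * x = (x * x) * (y * x))
    (h2 : ∀ x : J, x + x = 0 → x = 0) (x : J) :
    e*(e*(e*x)) + e*(e*(e*x)) + e*x = e*(e*x) + e*(e*x) + e*(e*x) := by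
  have h := linA e hid hJordan h2 x e
  rw [hid] at h
  rw [mul_comm x e] at h
  rw [mul_comm (e*x) e] at h
  rw [mul_comm (e*(e*x)) e] at h
  calc e*(e*(e*x)) + e*(e*(e*x)) + e*x = e*x + (e*(e*(e*x)) + e*(e*(e*x))) := by abel
    _ = e*(e*x) + (e*(e*x) + e*(e*x)) := h
    _ = e*(e*x) + e*(e*x) + e*(e*x) := by abel

lemma lemCP (e : J) (hid : e * e = e)
    (hJordan : ∀ x y : J, ((x * x) * y) * x = (x * x) * (y * x))
    (h2 : ∀ x : J, x + x = 0 → x = 0) (a b y : J) :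
    ((a*b)*y)*e + (((e*a)*y)*b + ((e*b)*y)*a) = (a*b)*(y*e) + ((e*a)*(y*b) + (e*b)*(y*a)) := by
  have hab := linB e hid hJordan h2 (a+b) y
  have ha := linB e hid hJordan h2 a y
  have hb := linB e hid hJordan h2 b y
  have hexp : ((a*a)*y)*e + ((a*b)*y)*e + ((b*a)*y)*e + ((b*b)*y)*e
      + (((e*a)*y)*a + ((e*a)*y)*b + ((e*b)*y)*a + ((e*b)*y)*b)
      + (((a*e)*y)*a + ((a*e)*y)*b + ((b*e)*y)*a + ((b*e)*y)*b)
      = (a*a)*(y*e) + (a*b)*(y*e) + (b*a)*(y*e) + (b*b)*(y*e)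
      + ((e*a)*(y*a) + (e*a)*(y*b) + (e*b)*(y*a) + (e*b)*(y*b))
      + ((a*e)*(y*a) + (a*e)*(y*b) + (b*e)*(y*a) + (b*e)*(y*b)) := by
    calc ((a*a)*y)*e + ((a*b)*y)*e + ((b*a)*y)*e + ((b*b)*y)*e
      + (((e*a)*y)*a + ((e*a)*y)*b + ((e*b)*y)*a + ((e*b)*y)*b)
      + (((a*e)*y)*a + ((a*e)*y)*b + ((b*e)*y)*a + ((b*e)*y)*b)
        = (((a+b)*(a+b))*y)*e + (((e*(a+b))*y)*(a+b) + (((a+b)*e)*y)*(a+b)) := by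
          simp only [mul_add, add_mul]; abel
      _ = ((a+b)*(a+b))*(y*e) + ((e*(a+b))*(y*(a+b)) + ((a+b)*e)*(y*(a+b))) := hab
      _ = _ := by simp only [mul_add, add_mul]; abel
  rw [mul_comm b a, mul_comm a e, mul_comm b e] at hexp
  rw [mul_comm a e] at ha
  rw [mul_comm b e] at hb
  apply half_eq h2
  rw [← sub_eq_zero]
  rw [← sub_eq_zero] at hexp ha hb
  calc (((a*b)*y)*e + (((e*a)*y)*b + ((e*b)*y)*a) + (((a*b)*y)*e + (((e*a)*y)*b + ((e*b)*y)*a)))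
      - ((a*b)*(y*e) + ((e*a)*(y*b) + (e*b)*(y*a)) + ((a*b)*(y*e) + ((e*a)*(y*b) + (e*b)*(y*a))))
      = (((a*a)*y)*e + ((a*b)*y)*e + ((a*b)*y)*e + ((b*b)*y)*e
          + (((e*a)*y)*a + ((e*a)*y)*b + ((e*b)*y)*a + ((e*b)*y)*b)
          + (((e*a)*y)*a + ((e*a)*y)*b + ((e*b)*y)*a + ((e*b)*y)*b)
          - ((a*a)*(y*e) + (a*b)*(y*e) + (a*b)*(y*e) + (b*b)*(y*e)
          + ((e*a)*(y*a) + (e*a)*(y*b) + (e*b)*(y*a) + (e*b)*(y*b))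
          + ((e*a)*(y*a) + (e*a)*(y*b) + (e*b)*(y*a) + (e*b)*(y*b))))
      - (((a*a)*y)*e + (((e*a)*y)*a + ((e*a)*y)*a)
          - ((a*a)*(y*e) + ((e*a)*(y*a) + (e*a)*(y*a))))
      - (((b*b)*y)*e + (((e*b)*y)*b + ((e*b)*y)*b)
          - ((b*b)*(y*e) + ((e*b)*(y*b) + (e*b)*(y*b)))) := by abel
    _ = 0 := by rw [hexp, ha, hb]; abel

lemma halfMulHalf (e : J) (hid : e * e = e)
    (hJordan : ∀ x y : J, ((x * x) * y) * x = (x * x) * (y * x))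
    (h2 : ∀ x : J, x + x = 0 → x = 0)
    (a b : J) (ha : e*a + e*a = a) (hb : e*b + e*b = b) :
    e*(e*(a*b)) = e*(a*b) := by
  have h := lemCP e hid hJordan h2 a b e
  rw [hid] at h
  rw [mul_comm (a*b) e] at h
  rw [mul_comm (e*(a*b)) e] at h
  rw [mul_comm (e*a) e, mul_comm (e*b) e] at h
  have hLa : e*(e*a) + e*(e*a) = e*a := by rw [← mul_add, ha]
  have hLb : e*(e*b) + e*(e*b) = e*b := by rw [← mul_add, hb]
  have h4A : (e*(e*a))*b + (e*(e*a))*b + ((e*(e*a))*b + (e*(e*a))*b) = a*b := by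
    have hh : ((e*(e*a) + e*(e*a)) + (e*(e*a) + e*(e*a)))*b = a*b := by rw [hLa, ha]
    rw [← hh]; simp only [add_mul]
  have h4B : (e*(e*b))*a + (e*(e*b))*a + ((e*(e*b))*a + (e*(e*b))*a) = a*b := by
    have hh : ((e*(e*b) + e*(e*b)) + (e*(e*b) + e*(e*b)))*a = a*b := by
      rw [hLb, hb, mul_comm b a]
    rw [← hh]; simp only [add_mul]
  have h4P : (e*a)*(e*b) + (e*a)*(e*b) + ((e*a)*(e*b) + (e*a)*(e*b)) = a*b := by
    have hh : ((e*a + e*a) + (e*a + e*a))*(e*b) = a*b := by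
      rw [ha, add_mul, ← mul_add, hb]
    rw [← hh]; simp only [add_mul]
  have h4Q : (e*b)*(e*a) + (e*b)*(e*a) + ((e*b)*(e*a) + (e*b)*(e*a)) = a*b := by
    have hh : ((e*b + e*b) + (e*b + e*b))*(e*a) = a*b := by
      rw [hb, add_mul, ← mul_add, ha, mul_comm b a]
    rw [← hh]; simp only [add_mul]
  have hfinal : (e*(e*(a*b)) + e*(e*(a*b)) + (e*(e*(a*b)) + e*(e*(a*b)))) + (a*b + a*b)
      = (e*(a*b) + e*(a*b) + (e*(a*b) + e*(a*b))) + (a*b + a*b) := by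
    calc (e*(e*(a*b)) + e*(e*(a*b)) + (e*(e*(a*b)) + e*(e*(a*b)))) + (a*b + a*b)
        = (e*(e*(a*b)) + e*(e*(a*b)) + (e*(e*(a*b)) + e*(e*(a*b))))
          + (((e*(e*a))*b + (e*(e*a))*b + ((e*(e*a))*b + (e*(e*a))*b))
            + ((e*(e*b))*a + (e*(e*b))*a + ((e*(e*b))*a + (e*(e*b))*a))) := by rw [h4A, h4B]
      _ = (e*(e*(a*b)) + ((e*(e*a))*b + (e*(e*b))*a))
          + ((e*(e*(a*b)) + ((e*(e*a))*b + (e*(e*b))*a))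
          + ((e*(e*(a*b)) + ((e*(e*a))*b + (e*(e*b))*a))
          + (e*(e*(a*b)) + ((e*(e*a))*b + (e*(e*b))*a)))) := by abel
      _ = (e*(a*b) + ((e*a)*(e*b) + (e*b)*(e*a)))
          + ((e*(a*b) + ((e*a)*(e*b) + (e*b)*(e*a)))
          + ((e*(a*b) + ((e*a)*(e*b) + (e*b)*(e*a)))
          + (e*(a*b) + ((e*a)*(e*b) + (e*b)*(e*a))))) := by rw [h]
      _ = (e*(a*b) + e*(a*b) + (e*(a*b) + e*(a*b)))
          + (((e*a)*(e*b) + (e*a)*(e*b) + ((e*a)*(e*b) + (e*a)*(e*b)))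
            + ((e*b)*(e*a) + (e*b)*(e*a) + ((e*b)*(e*a) + (e*b)*(e*a)))) := by abel
      _ = _ := by rw [h4P, h4Q]
  exact half_eq h2 (half_eq h2 (add_right_cancel hfinal))

/-- Peirce projections -/
def p1 (e v : J) : J := (e*(e*v) + e*(e*v)) - e*v
def pH (e v : J) : J := (e*v + e*v + (e*v + e*v)) - (e*(e*v) + e*(e*v) + (e*(e*v) + e*(e*v)))
def p0 (e v : J) : J := v - p1 e v - pH e v

lemma p_decomp (e v : J) : p1 e v + pH e v + p0 e v = v := by
  unfold p0; abel

section Proj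
variable (e : J) (hOP : ∀ x : J, e*(e*(e*x)) + e*(e*(e*x)) + e*x
      = e*(e*x) + e*(e*x) + e*(e*x))

include hOP in
lemma p1_mem (v : J) : e * p1 e v = p1 e v := by
  unfold p1
  have h := hOP v
  have h' : e*(e*(e*v)) + e*(e*(e*v)) = (e*(e*v) + e*(e*v) + e*(e*v)) - e*v := by
    rw [← h]; abel
  rw [mul_sub, mul_add, h']; abel

include hOP in
lemma pH_mem (v : J) : e * pH e v + e * pH e v = pH e v := by
  have hd : (e*(e*(e*v)) + e*(e*(e*v)) + e*v) - (e*(e*v) + e*(e*v) + e*(e*v)) = 0 :=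
    sub_eq_zero.mpr (hOP v)
  have hz : (0:J) = -((((e*(e*(e*v)) + e*(e*(e*v)) + e*v) - (e*(e*v) + e*(e*v) + e*(e*v)))
      + ((e*(e*(e*v)) + e*(e*(e*v)) + e*v) - (e*(e*v) + e*(e*v) + e*(e*v))))
      + (((e*(e*(e*v)) + e*(e*(e*v)) + e*v) - (e*(e*v) + e*(e*v) + e*(e*v)))
      + ((e*(e*(e*v)) + e*(e*(e*v)) + e*v) - (e*(e*v) + e*(e*v) + e*(e*v))))) := by
    rw [hd]; simp
  rw [← sub_eq_zero]
  unfold pH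
  simp only [mul_sub, mul_add]
  rw [hz]
  abel

include hOP in
lemma p0_mem (v : J) : e * p0 e v = 0 := by
  have hd : (e*(e*(e*v)) + e*(e*(e*v)) + e*v) - (e*(e*v) + e*(e*v) + e*(e*v)) = 0 :=
    sub_eq_zero.mpr (hOP v)
  unfold p0 p1 pH
  simp only [mul_sub, mul_add]
  rw [← hd]
  abel
end Proj

lemma pH_add (e a b : J) : pH e (a + b) = pH e a + pH e b := by
  unfold pH
  simp only [mul_add]
  abel

lemma pH_of_J1 (e a : J) (ha : e * a = a) : pH e a = 0 := by
  unfold pH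
  simp only [ha, sub_self]

lemma pH_of_J0 (e a : J) (ha : e * a = 0) : pH e a = 0 := by
  unfold pH
  simp only [ha, mul_zero, add_zero, sub_self]

lemma pH_of_half (e a : J) (ha : e * a + e * a = a) : pH e a = a := by
  have hL : e*(e*a) + e*(e*a) = e*a := by rw [← mul_add, ha]
  unfold pH
  rw [ha, hL, ha, add_sub_cancel_right]

lemma pH_of_L2 (e a : J) (h : e * (e * a) = e * a) : pH e a = 0 := by
  unfold pH
  rw [h, sub_self]

lemma der_zero {n : ℕ} (hn : 2 ≤ n) (D : J → J) (hder : IsNDer n D) : D 0 = 0 := by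
  have h := master hn D hder (List.replicate (n-1) (0:J)) (by simp) 0
  rw [chain_zero_right] at h
  have h1 : ∀ i ∈ Finset.range (n-1),
      chain ((List.replicate (n-1) (0:J)).set i
        (D ((List.replicate (n-1) (0:J)).getD i 0))) (0:J) = 0 :=
    fun i _ => chain_zero_right _
  rw [Finset.sum_congr rfl h1, Finset.sum_const_zero] at h
  have h2 : chain (List.replicate (n-1) (0:J)) (D 0) = 0 :=
    chain_of_zero_mem _ _ (by simp [List.mem_replicate]; omega)
  rw [h2] at h
  simpa using h

lemma der_mul_e {n : ℕ} (hn : 2 ≤ n) (e : J) (hid : e * e = e)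
    (D : J → J) (hder : IsNDer n D) (hDe : D e = 0) (x : J) :
    D (x * e) = D x * e := by
  have hlen : (x :: List.replicate (n-2) e).length = n - 1 := by simp; omega
  have h := master hn D hder (x :: List.replicate (n-2) e) hlen e
  have hc0 : chain (x :: List.replicate (n-2) e) e = x * e := by
    rw [chain_cons, chain_replicate, Lp_e e hid]
  have hsum : ∑ i ∈ Finset.range (n-1),
      chain ((x :: List.replicate (n-2) e).set i
        (D ((x :: List.replicate (n-2) e).getD i 0))) e = D x * e := by
    rw [Finset.sum_eq_single_of_mem 0 (Finset.mem_range.mpr (by omega))]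
    · rw [List.getD_cons_zero, List.set_cons_zero, chain_cons, chain_replicate, Lp_e e hid]
    · intro i hi hne
      have hi' : i < n - 1 := Finset.mem_range.mp hi
      obtain ⟨j, rfl⟩ : ∃ j, i = j + 1 := ⟨i - 1, by omega⟩
      rw [List.getD_cons_succ, List.set_cons_succ,
        getD_replicate' e (n-2) j (by omega), hDe, chain_cons,
        chain_of_zero_mem _ _ (zero_mem_set _ j (by simp; omega)), mul_zero]
  rw [hc0, hsum, hDe, chain_zero_right, add_zero] at h
  exact h

lemma der_e_mul {n : ℕ} (hn : 2 ≤ n) (e : J) (hid : e * e = e)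
    (D : J → J) (hder : IsNDer n D) (hDe : D e = 0) (x : J) :
    D (e * x) = e * D x := by
  rw [mul_comm e x, der_mul_e hn e hid D hder hDe x, mul_comm]

lemma der_Lp {n : ℕ} (hn : 2 ≤ n) (e : J) (hid : e * e = e)
    (D : J → J) (hder : IsNDer n D) (hDe : D e = 0) (k : ℕ) (x : J) :
    D (Lp e k x) = Lp e k (D x) := by
  induction k with
  | zero => rfl
  | succ k ih => rw [Lp_succ, der_e_mul hn e hid D hder hDe, ih, Lp_succ]

lemma der_delta {n : ℕ} (hn : 2 ≤ n) (e : J) (hid : e * e = e)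
    (hOP : ∀ x : J, e*(e*(e*x)) + e*(e*(e*x)) + e*x = e*(e*x) + e*(e*x) + e*(e*x))
    (D : J → J) (hder : IsNDer n D) (hDe : D e = 0) (t x : J) :
    e * (D (t * x) - (D t * x + t * D x)) = 0 := by
  have hlen : (List.replicate (n-2) e ++ [t]).length = n - 1 := by simp; omega
  have h := master hn D hder (List.replicate (n-2) e ++ [t]) hlen x
  have hc0 : chain (List.replicate (n-2) e ++ [t]) x = Lp e (n-2) (t * x) := by
    rw [chain_append_singleton, chain_replicate]
  have hsum : ∑ i ∈ Finset.range (n-1),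
      chain ((List.replicate (n-2) e ++ [t]).set i
        (D ((List.replicate (n-2) e ++ [t]).getD i 0))) x = Lp e (n-2) (D t * x) := by
    rw [Finset.sum_eq_single_of_mem (n-2) (Finset.mem_range.mpr (by omega))]
    · have hg : (List.replicate (n-2) e ++ [t]).getD (n-2) 0 = t := by
        rw [List.getD_append_right _ _ _ _ (by simp : (List.replicate (n-2) (e:J)).length ≤ n-2)]
        simp
      have hs : (List.replicate (n-2) e ++ [t]).set (n-2) (D t) = List.replicate (n-2) e ++ [D t] := by
        rw [List.set_append_right _ _ (by simp : (List.replicate (n-2) (e:J)).length ≤ n-2)]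
        simp
      rw [hg, hs, chain_append_singleton, chain_replicate]
    · intro i hi hne
      have hi' : i < n - 1 := Finset.mem_range.mp hi
      have hil : i < (List.replicate (n-2) (e:J)).length := by simp; omega
      rw [List.getD_append _ _ _ _ hil, List.set_append_left _ _ hil,
        getD_replicate' e (n-2) i (by omega), hDe, chain_append_singleton,
        chain_of_zero_mem _ _ (zero_mem_set _ i (by simp; omega))]
  rw [hc0, hsum, chain_append_singleton, chain_replicate] at h
  rw [der_Lp hn e hid D hder hDe] at h
  have hz : Lp e (n-2) (D (t*x) - (D t * x + t * D x)) = 0 := by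
    rw [Lp_sub, Lp_add', ← h, sub_self]
  exact descent e hOP (n-2) _ hz

end NDerAux

open NDerAux

theorem nDer_add_components {n : ℕ} (hn : 2 ≤ n) {J : Type*} [NonUnitalNonAssocCommRing J]
    (hJordan : ∀ x y : J, ((x * x) * y) * x = (x * x) * (y * x))
    (h2 : ∀ x : J, x + x = 0 → x = 0)
    (hn1 : ∀ x : J, (n - 1) • x = 0 → x = 0)
    (e : J) (hid : e * e = e) (hne : e ≠ 0) (hnu : ∃ x : J, e * x ≠ x)
    (hcond1 : ∀ a ∈ peirce1 e, (∀ t ∈ peirceHalf e, t * a = 0) → a = 0)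
    (hcond1' : ∀ a ∈ peirce0 e, (∀ t ∈ peirceHalf e, t * a = 0) → a = 0)
    (hcond2 : ∀ a ∈ peirce0 e, (∀ t ∈ peirce0 e, t * a = 0) → a = 0)
    (hcond3 : ∀ a ∈ peirceHalf e, (∀ t ∈ peirce0 e, t * a = 0) → a = 0)
    (D : J → J) (hder : IsNDer n D) (hDe : D e = 0) :
    ∀ a₁ ∈ peirce1 e, ∀ a₂ ∈ peirceHalf e, ∀ a₀ ∈ peirce0 e,
      D (a₁ + a₂ + a₀) = D a₁ + D a₂ + D a₀ := by
  intro a₁ ha1' a₂ ha2' a₀ ha0'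
  have ha1 : e * a₁ = a₁ := ha1'
  have ha2 : e * a₂ + e * a₂ = a₂ := ha2'
  have ha0 : e * a₀ = 0 := ha0'
  -- basic algebra
  have hOP : ∀ x : J, e*(e*(e*x)) + e*(e*(e*x)) + e*x = e*(e*x) + e*(e*x) + e*(e*x) :=
    opIdent e hid hJordan h2
  have hJ1mul : ∀ a y : J, e * a = a → e * (a * y) = a * (e * y) :=
    fun a y ha => lemJ1 e hid hJordan h2 a y ha
  have hJ0mul : ∀ a y : J, e * a = 0 → e * (y * a) = (e * y) * a :=
    fun a y ha => lemJ0 e hid hJordan h2 a y ha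
  -- Peirce multiplication rules
  have hP2 : ∀ a b : J, e * a = a → e * b = 0 → a * b = 0 := by
    intro a b hA hB
    have c1 : e * (a * b) = a * (e * b) := hJ1mul a b hA
    rw [hB, mul_zero] at c1
    have c2 : e * (a * b) = (e * a) * b := hJ0mul b a hB
    rw [hA] at c2
    rw [← c2, c1]
  have hP4 : ∀ a b : J, e * a = 0 → e * b = 0 → e * (a * b) = 0 := by
    intro a b hA hB
    have c2 : e * (a * b) = (e * a) * b := hJ0mul b a hB
    rw [hA, zero_mul] at c2
    exact c2
  have hP3' : ∀ a u : J, e * a = a → e * u + e * u = u → e * (a * u) + e * (a * u) = a * u := by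
    intro a u hA hU
    have c1 : e * (a * u) = a * (e * u) := hJ1mul a u hA
    rw [c1, ← mul_add, hU]
  have hP5' : ∀ a u : J, e * a = 0 → e * u + e * u = u → e * (u * a) + e * (u * a) = u * a := by
    intro a u hA hU
    have c1 : e * (u * a) = (e * u) * a := hJ0mul a u hA
    rw [c1, ← add_mul, hU]
  -- derivation basics
  have hD0 : D 0 = 0 := der_zero hn D hder
  have hDem : ∀ x : J, D (e * x) = e * D x := der_e_mul hn e hid D hder hDe
  have hDJ1 : ∀ z : J, e * z = z → e * D z = D z := by
    intro z hz
    rw [← hDem z, hz]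
  have hDJ0 : ∀ z : J, e * z = 0 → e * D z = 0 := by
    intro z hz
    rw [← hDem z, hz, hD0]
  have hdel : ∀ t x : J, e * (D (t * x) - (D t * x + t * D x)) = 0 :=
    fun t x => der_delta hn e hid hOP D hder hDe t x
  -- J0 closed under + and -
  have hJ0add : ∀ a b : J, e * a = 0 → e * b = 0 → e * (a + b) = 0 := by
    intro a b hA hB; rw [mul_add, hA, hB, add_zero]
  have hJ0sub : ∀ a b : J, e * a = 0 → e * b = 0 → e * (a - b) = 0 := by
    intro a b hA hB; rw [mul_sub, hA, hB, sub_zero]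
  -- adapters for conditions
  have hc2 : ∀ a : J, e * a = 0 → (∀ t : J, e * t = 0 → t * a = 0) → a = 0 := by
    intro a hA h
    exact hcond2 a hA (fun t ht => h t ht)
  -- Lemma K: if z ∈ J1 then D(z+y) - D y - D z ∈ J1
  have hK : ∀ z y : J, e * z = z →
      e * (D (z + y) - D y - D z) = D (z + y) - D y - D z := by
    intro z y hz
    have hDz1 : e * D z = D z := hDJ1 z hz
    have hstep : ∀ t : J, e * t = 0 → ∀ vs : List J, vs.length = n - 2 →
        chain vs (t * (D (z + y) - D y - D z)) = 0 := by
      intro t ht vs hvs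
      have h1 : t * z = 0 := by rw [mul_comm]; exact hP2 z t hz ht
      have h2' : D t * z = 0 := by rw [mul_comm]; exact hP2 z (D t) hz (hDJ0 t ht)
      have hc := Kcore hn D hder vs hvs t z y h1 h2'
      have htDz : t * D z = 0 := by rw [mul_comm]; exact hP2 (D z) t hDz1 ht
      have heq : t * (D (z + y) - D y - D z) = t * (D (z + y) - D y) := by
        rw [sub_sub, mul_sub, mul_sub, mul_add, htDz, add_zero]
      rw [heq]
      exact hc
    set Δ := D (z + y) - D y - D z with hΔdef
    have hmemJ0 : ∀ t : J, e * t = 0 → e * (t * Δ) = 0 := by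
      intro t ht
      have hchain := hstep t ht (List.replicate (n-2) e) (by simp)
      rw [chain_replicate] at hchain
      exact descent e hOP (n-2) _ hchain
    have htp1 : ∀ t : J, e * t = 0 → t * p1 e Δ = 0 := by
      intro t ht
      rw [mul_comm]; exact hP2 (p1 e Δ) t (p1_mem e hOP Δ) ht
    have hpH : pH e Δ = 0 := by
      apply hcond3 (pH e Δ) (pH_mem e hOP Δ)
      intro t ht
      have ht' : e * t = 0 := ht
      -- e*(t*Δ)=0 and decomposition
      have hdec : t * Δ = t * p1 e Δ + t * pH e Δ + t * p0 e Δ := by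
        rw [← mul_add, ← mul_add, p_decomp]
      have hE : e * (t * pH e Δ) = 0 := by
        have h1 := hmemJ0 t ht'
        rw [hdec, mul_add, mul_add] at h1
        rw [htp1 t ht', mul_zero, zero_add] at h1
        rw [hP4 t (p0 e Δ) ht' (p0_mem e hOP Δ), add_zero] at h1
        exact h1
      have h5 := hP5' t (pH e Δ) ht' (pH_mem e hOP Δ)
      rw [mul_comm (pH e Δ) t] at h5
      rw [hE, add_zero] at h5
      exact h5.symm
    have hp0 : p0 e Δ = 0 := by
      apply hc2 (p0 e Δ) (p0_mem e hOP Δ)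
      intro t ht
      have hkill : t * Δ = 0 := by
        apply iterKill e hP4 hc2 (n-2) (t * Δ) (hmemJ0 t ht)
        intro ss hss _
        exact hstep t ht ss hss
      have hdec : t * Δ = t * p1 e Δ + t * pH e Δ + t * p0 e Δ := by
        rw [← mul_add, ← mul_add, p_decomp]
      rw [hkill, htp1 t ht, hpH, mul_zero, zero_add, zero_add] at hdec
      exact hdec.symm
    have hfin : Δ = p1 e Δ := by
      have hd := p_decomp e Δ
      rw [hpH, hp0, add_zero, add_zero] at hd
      exact hd.symm
    rw [hfin]
    exact p1_mem e hOP Δ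
  -- Lemma K': if z ∈ J0 then D(z+y) - D y - D z ∈ J0
  have hK' : ∀ z y : J, e * z = 0 → e * (D (z + y) - D y - D z) = 0 := by
    intro z y hz
    have h1 : e * D (z + y) = e * D y := by
      rw [← hDem, ← hDem, mul_add, hz, zero_add]
    rw [mul_sub, mul_sub, h1, hDJ0 z hz, sub_zero, sub_self]
  -- Claim A : additivity on J1 + J0
  have hA : ∀ b1 b0 : J, e * b1 = b1 → e * b0 = 0 → D (b1 + b0) = D b1 + D b0 := by
    intro b1 b0 h1 h0
    have hx := hK b1 b0 h1
    have hy := hK' b0 b1 h0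
    rw [add_comm b0 b1] at hy
    have heq : D (b1 + b0) - D b1 - D b0 = D (b1 + b0) - D b0 - D b1 := by abel
    rw [← heq] at hx
    have hz : D (b1 + b0) - D b1 - D b0 = 0 := by rw [← hx]; exact hy
    have : D (b1 + b0) - (D b1 + D b0) = 0 := by rw [← hz]; abel
    exact sub_eq_zero.mp this
  -- Theta : additivity on J1 + J½
  have hTheta : ∀ u1 u2 : J, e * u1 = u1 → e * u2 + e * u2 = u2 →
      D (u1 + u2) = D u1 + D u2 := by
    intro u1 u2 h1 h21
    set Θ := D (u1 + u2) - D u2 - D u1 with hΘdef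
    have hT1 : e * Θ = Θ := by
      have := hK u1 u2 h1
      have heq : D (u1 + u2) - D u2 - D u1 = D (u1 + u2) - D u2 - D u1 := rfl
      have habel : D (u1 + u2) - D u2 - D u1 = D (u1 + u2) - D u2 - D u1 := rfl
      -- hK gives D(u1+u2) - D u2 - D u1 with y := u2 : expression is D (u1+u2) - D u2 - D u1
      exact this
    have hkill : ∀ t : J, e * t + e * t = t → t * Θ = 0 := by
      intro t ht
      set B1 := p1 e (t * u2) with hB1def
      set B0 := p0 e (t * u2) with hB0def
      have hBH : pH e (t * u2) = 0 :=
        pH_of_L2 e (t * u2) (by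
          have := halfMulHalf e hid hJordan h2 t u2 ht h21
          exact this)
      have hBdec : B1 + B0 = t * u2 := by
        have hd := p_decomp e (t * u2)
        rw [hBH, add_zero] at hd
        exact hd
      have hB1m : e * B1 = B1 := p1_mem e hOP (t * u2)
      have hB0m : e * B0 = 0 := p0_mem e hOP (t * u2)
      have harg : B1 + (t * u1 + B0) = t * (u1 + u2) := by
        rw [mul_add, ← hBdec]; abel
      have hX := hK B1 (t * u1 + B0) hB1m
      rw [harg] at hX
      have hY := hK' B0 (t * u1) hB0m
      rw [add_comm B0 (t * u1)] at hY
      have hA2 : D (t * u2) = D B1 + D B0 := by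
        rw [← hBdec]
        exact hA B1 B0 hB1m hB0m
      have d1 := hdel t (u1 + u2)
      have d2 := hdel t u1
      have d3 := hdel t u2
      -- key algebraic identity
      have key : t * Θ =
          (D (t * (u1 + u2)) - D (t * u1 + B0) - D B1)
          + ((D (t * u1 + B0) - D (t * u1) - D B0)
            + (((D (t * u1) - (D t * u1 + t * D u1)) + (D (t * u2) - (D t * u2 + t * D u2)))
              - (D (t * (u1 + u2)) - (D t * (u1 + u2) + t * D (u1 + u2))))) := by
        rw [hΘdef]
        rw [hA2]
        simp only [mul_sub, mul_add]
        abel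
      have hXm : e * (D (t * (u1 + u2)) - D (t * u1 + B0) - D B1)
          = D (t * (u1 + u2)) - D (t * u1 + B0) - D B1 := hX
      have hYm : e * ((D (t * u1 + B0) - D (t * u1) - D B0)
            + (((D (t * u1) - (D t * u1 + t * D u1)) + (D (t * u2) - (D t * u2 + t * D u2)))
              - (D (t * (u1 + u2)) - (D t * (u1 + u2) + t * D (u1 + u2))))) = 0 := by
        apply hJ0add
        · exact hY
        · apply hJ0sub
          · exact hJ0add _ _ d2 d3
          · exact d1
      -- t * Θ is in J½
      have hhalf : e * (t * Θ) + e * (t * Θ) = t * Θ := by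
        have h5 := hP3' Θ t hT1 ht
        rw [mul_comm Θ t] at h5
        exact h5
      have hpHt : pH e (t * Θ) = t * Θ := pH_of_half e (t * Θ) hhalf
      rw [key] at hpHt
      rw [pH_add, pH_of_J1 _ _ hXm, pH_of_J0 _ _ hYm, add_zero] at hpHt
      rw [key, ← hpHt]
    have hzero : Θ = 0 := by
      apply hcond1 Θ hT1
      intro t ht
      exact hkill t ht
    have : D (u1 + u2) - (D u1 + D u2) = 0 := by
      rw [← hzero, hΘdef]; abel
    exact sub_eq_zero.mp this
  -- Psi : additivity on J½ + J0
  have hPsi : ∀ u2 u0 : J, e * u2 + e * u2 = u2 → e * u0 = 0 →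
      D (u2 + u0) = D u2 + D u0 := by
    intro u2 u0 h21 h0
    set Ψ := D (u2 + u0) - D u2 - D u0 with hΨdef
    have hPm : e * Ψ = 0 := by
      have := hK' u0 u2 h0
      rw [add_comm u0 u2] at this
      have heq : D (u2 + u0) - D u2 - D u0 = D (u2 + u0) - D u2 - D u0 := rfl
      exact this
    have hkill : ∀ t : J, e * t + e * t = t → t * Ψ = 0 := by
      intro t ht
      set B1 := p1 e (t * u2) with hB1def
      set B0 := p0 e (t * u2) with hB0def
      have hBH : pH e (t * u2) = 0 :=
        pH_of_L2 e (t * u2) (halfMulHalf e hid hJordan h2 t u2 ht h21)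
      have hBdec : B1 + B0 = t * u2 := by
        have hd := p_decomp e (t * u2)
        rw [hBH, add_zero] at hd
        exact hd
      have hB1m : e * B1 = B1 := p1_mem e hOP (t * u2)
      have hB0m : e * B0 = 0 := p0_mem e hOP (t * u2)
      have harg : B1 + (t * u0 + B0) = t * (u2 + u0) := by
        rw [mul_add, ← hBdec]; abel
      have hX := hK B1 (t * u0 + B0) hB1m
      rw [harg] at hX
      have hY := hK' B0 (t * u0) hB0m
      rw [add_comm B0 (t * u0)] at hY
      have hA2 : D (t * u2) = D B1 + D B0 := by
        rw [← hBdec]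
        exact hA B1 B0 hB1m hB0m
      have d1 := hdel t (u2 + u0)
      have d2 := hdel t u2
      have d3 := hdel t u0
      have key : t * Ψ =
          (D (t * (u2 + u0)) - D (t * u0 + B0) - D B1)
          + ((D (t * u0 + B0) - D (t * u0) - D B0)
            + (((D (t * u2) - (D t * u2 + t * D u2)) + (D (t * u0) - (D t * u0 + t * D u0)))
              - (D (t * (u2 + u0)) - (D t * (u2 + u0) + t * D (u2 + u0))))) := by
        rw [hΨdef]
        rw [hA2]
        simp only [mul_sub, mul_add]
        abel
      have hXm : e * (D (t * (u2 + u0)) - D (t * u0 + B0) - D B1)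
          = D (t * (u2 + u0)) - D (t * u0 + B0) - D B1 := hX
      have hYm : e * ((D (t * u0 + B0) - D (t * u0) - D B0)
            + (((D (t * u2) - (D t * u2 + t * D u2)) + (D (t * u0) - (D t * u0 + t * D u0)))
              - (D (t * (u2 + u0)) - (D t * (u2 + u0) + t * D (u2 + u0))))) = 0 := by
        apply hJ0add
        · exact hY
        · apply hJ0sub
          · exact hJ0add _ _ d2 d3
          · exact d1
      have hhalf : e * (t * Ψ) + e * (t * Ψ) = t * Ψ := hP5' Ψ t hPm ht
      have hpHt : pH e (t * Ψ) = t * Ψ := pH_of_half e (t * Ψ) hhalf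
      rw [key] at hpHt
      rw [pH_add, pH_of_J1 _ _ hXm, pH_of_J0 _ _ hYm, add_zero] at hpHt
      rw [key, ← hpHt]
    have hzero : Ψ = 0 := by
      apply hcond1' Ψ hPm
      intro t ht
      exact hkill t ht
    have : D (u2 + u0) - (D u2 + D u0) = 0 := by
      rw [← hzero, hΨdef]; abel
    exact sub_eq_zero.mp this
  -- final assembly
  have hX1 := hK a₁ (a₂ + a₀) ha1
  rw [hPsi a₂ a₀ ha2 ha0, ← add_assoc] at hX1
  have hX0 := hK' a₀ (a₁ + a₂) ha0
  rw [hTheta a₁ a₂ ha1 ha2, add_comm a₀ (a₁ + a₂)] at hX0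
  have hE1 : D (a₁ + a₂ + a₀) - (D a₂ + D a₀) - D a₁
      = D (a₁ + a₂ + a₀) - (D a₁ + D a₂) - D a₀ := by abel
  rw [hE1] at hX1
  have hPhi : D (a₁ + a₂ + a₀) - (D a₁ + D a₂) - D a₀ = 0 := by
    rw [← hX1]; exact hX0
  have : D (a₁ + a₂ + a₀) - (D a₁ + D a₂ + D a₀) = 0 := by
    rw [← hPhi]; abel
  exact sub_eq_zero.mp this
end
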